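/- arXiv:2406.02087 — 8 statements merged into one kernel-verified Lean document; each statement's English description precedes it below -/
import Mathlib

section
/- Let φ be a Schwartz function on ℝⁿ and φ_t(x) := t^{-n}φ(x/t). There exists C > 0 depending only on n and φ such that for every ball B(x₀, r), every x ∈ B(x₀, r), every y ∉ B(x₀, 2r), and every t > 0, |∂/∂t(φ_t(x − y))| ≤ C / |y − x₀|^{n+1}. -/
open MeasureTheory Metric

/-- Dilation `φ_t(x) = t^{-n} φ(x/t)` of a Schwartz function. -/
noncomputable def schwartzDil {n : ℕ} (φ : SchwartzMap (EuclideanSpace ℝ (Fin n)) ℝ)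
    (t : ℝ) (x : EuclideanSpace ℝ (Fin n)) : ℝ :=
  t ^ (-(n : ℤ)) * φ (t⁻¹ • x)

lemma hasDerivAt_schwartzDil {n : ℕ} (φ : SchwartzMap (EuclideanSpace ℝ (Fin n)) ℝ)
    (v : EuclideanSpace ℝ (Fin n)) {t : ℝ} (ht : t ≠ 0) :
    HasDerivAt (fun s : ℝ => schwartzDil φ s v)
      ((-(n : ℤ)) * t ^ (-(n : ℤ) - 1) * φ (t⁻¹ • v)
        + t ^ (-(n : ℤ)) * (fderiv ℝ φ (t⁻¹ • v)) ((-(t ^ 2)⁻¹) • v)) t := by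
  have h1 : HasDerivAt (fun s : ℝ => s ^ (-(n : ℤ))) ((-(n : ℤ)) * t ^ (-(n : ℤ) - 1)) t := by
    exact_mod_cast hasDerivAt_zpow (-(n : ℤ)) t (Or.inl ht)
  have h2 : HasDerivAt (fun s : ℝ => s⁻¹ • v) ((-(t ^ 2)⁻¹) • v) t := by
    simpa using (hasDerivAt_inv ht).smul_const v
  have hφ : HasFDerivAt φ (fderiv ℝ φ (t⁻¹ • v)) (t⁻¹ • v) :=
    (φ.differentiable.differentiableAt).hasFDerivAt
  have h3 : HasDerivAt (fun s : ℝ => φ (s⁻¹ • v))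
      ((fderiv ℝ φ (t⁻¹ • v)) ((-(t ^ 2)⁻¹) • v)) t := hφ.comp_hasDerivAt t h2
  exact h1.mul h3

lemma fderiv_apply_le {n : ℕ} (φ : SchwartzMap (EuclideanSpace ℝ (Fin n)) ℝ)
    (u w : EuclideanSpace ℝ (Fin n)) :
    |fderiv ℝ φ u w| ≤ ‖iteratedFDeriv ℝ 1 φ u‖ * ‖w‖ := by
  have h : fderiv ℝ φ u w = iteratedFDeriv ℝ 1 φ u (fun _ => w) := by
    rw [iteratedFDeriv_one_apply]
  rw [← Real.norm_eq_abs, h]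
  simpa using (iteratedFDeriv ℝ 1 φ u).le_opNorm (fun _ => w)

theorem stmt1 (n : ℕ) (φ : SchwartzMap (EuclideanSpace ℝ (Fin n)) ℝ) :
    ∃ C > 0, ∀ (x₀ : EuclideanSpace ℝ (Fin n)) (r : ℝ), 0 < r →
      ∀ x ∈ ball x₀ r, ∀ y ∉ ball x₀ (2 * r), ∀ t : ℝ, 0 < t →
        |deriv (fun s : ℝ => schwartzDil φ s (x - y)) t| ≤ C / ‖y - x₀‖ ^ (n + 1) := by
  obtain ⟨C₀, hC₀pos, hC₀⟩ := φ.decay (n + 1) 0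
  obtain ⟨C₁, hC₁pos, hC₁⟩ := φ.decay (n + 2) 1
  refine ⟨2 ^ (n + 1) * (n * C₀ + C₁), by positivity, ?_⟩
  intro x₀ r hr x hx y hy t ht
  set v := x - y with hv
  -- basic geometry : ‖y - x₀‖ / 2 ≤ ‖v‖
  have hxx₀ : ‖x - x₀‖ < r := by simpa [dist_eq_norm] using hx
  have hyx₀ : 2 * r ≤ ‖y - x₀‖ := by simpa [dist_eq_norm, not_lt] using hy
  have hyx₀pos : 0 < ‖y - x₀‖ := lt_of_lt_of_le (by linarith) hyx₀
  have hvlow : ‖y - x₀‖ / 2 ≤ ‖v‖ := by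
    have h1 : ‖y - x₀‖ ≤ ‖y - x‖ + ‖x - x₀‖ := by
      simpa using norm_add_le (y - x) (x - x₀)
    have h2 : ‖y - x‖ = ‖v‖ := by rw [hv, norm_sub_rev]
    linarith
  have hvpos : 0 < ‖v‖ := lt_of_lt_of_le (by positivity) hvlow
  set u := t⁻¹ • v with hu
  have hUV : ‖u‖ = ‖v‖ / t := by
    rw [hu, norm_smul, Real.norm_eq_abs, abs_inv, abs_of_pos ht]; ring
  have hVTU : ‖v‖ = t * ‖u‖ := by rw [hUV]; field_simp
  have hupos : 0 < ‖u‖ := by rw [hUV]; positivity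
  -- the derivative
  rw [(hasDerivAt_schwartzDil φ v ht.ne').deriv]
  -- rewrite zpow as pow
  have hz1 : t ^ (-(n : ℤ) - 1) = (t ^ (n + 1))⁻¹ := by
    rw [show -(n : ℤ) - 1 = -((n + 1 : ℕ) : ℤ) by push_cast; ring, zpow_neg, zpow_natCast]
  have hz0 : t ^ (-(n : ℤ)) = (t ^ n)⁻¹ := by rw [zpow_neg, zpow_natCast]
  -- decay bounds
  have hA : ‖u‖ ^ (n + 1) * |φ u| ≤ C₀ := by
    simpa [norm_iteratedFDeriv_zero] using hC₀ u
  have hB : ‖u‖ ^ (n + 2) * ‖iteratedFDeriv ℝ 1 φ u‖ ≤ C₁ := hC₁ u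
  set A := |φ u| with hAdef
  set B := ‖iteratedFDeriv ℝ 1 φ u‖ with hBdef
  have hAnn : 0 ≤ A := abs_nonneg _
  have hBnn : 0 ≤ B := norm_nonneg _
  -- bound the derivative by D₀
  have habs : |(-(n : ℤ)) * t ^ (-(n : ℤ) - 1) * φ u
        + t ^ (-(n : ℤ)) * (fderiv ℝ φ u) ((-(t ^ 2)⁻¹) • v)|
      ≤ (n : ℝ) * (t ^ (n + 1))⁻¹ * A + (t ^ n)⁻¹ * ((t ^ 2)⁻¹ * (B * ‖v‖)) := by
    rw [hz1, hz0]
    refine (abs_add_le _ _).trans (add_le_add ?_ ?_)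
    · rw [abs_mul, abs_mul]
      have : |((-(n : ℤ) : ℝ))| = (n : ℝ) := by
        push_cast; rw [abs_neg, abs_of_nonneg (by positivity)]
      rw [this, abs_of_nonneg (by positivity : (0:ℝ) ≤ (t ^ (n + 1))⁻¹)]
    · rw [abs_mul, abs_of_nonneg (by positivity : (0:ℝ) ≤ (t ^ n)⁻¹)]
      refine mul_le_mul_of_nonneg_left ?_ (by positivity)
      have hw : ‖(-(t ^ 2)⁻¹) • v‖ = (t ^ 2)⁻¹ * ‖v‖ := by
        rw [norm_smul, Real.norm_eq_abs, abs_neg, abs_inv, abs_of_pos (by positivity)]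
      calc |(fderiv ℝ φ u) ((-(t ^ 2)⁻¹) • v)| ≤ B * ‖(-(t ^ 2)⁻¹) • v‖ :=
            fderiv_apply_le φ u _
        _ = (t ^ 2)⁻¹ * (B * ‖v‖) := by rw [hw]; ring
  refine habs.trans ?_
  -- clear denominators: multiply by ‖v‖^(n+1)
  have hmain : ((n : ℝ) * (t ^ (n + 1))⁻¹ * A + (t ^ n)⁻¹ * ((t ^ 2)⁻¹ * (B * ‖v‖)))
        * ‖v‖ ^ (n + 1) = (n : ℝ) * (‖u‖ ^ (n + 1) * A) + ‖u‖ ^ (n + 2) * B := by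
    rw [hVTU]
    field_simp
    ring
  have step1 : (n : ℝ) * (t ^ (n + 1))⁻¹ * A + (t ^ n)⁻¹ * ((t ^ 2)⁻¹ * (B * ‖v‖))
      ≤ ((n : ℝ) * C₀ + C₁) / ‖v‖ ^ (n + 1) := by
    rw [le_div_iff₀ (by positivity)]
    rw [hmain]
    have h1 : (n : ℝ) * (‖u‖ ^ (n + 1) * A) ≤ n * C₀ :=
      mul_le_mul_of_nonneg_left hA (by positivity)
    linarith
  refine step1.trans ?_
  -- compare ‖v‖ with ‖y - x₀‖ / 2
  have hpow : (‖y - x₀‖ / 2) ^ (n + 1) ≤ ‖v‖ ^ (n + 1) :=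
    pow_le_pow_left₀ (by positivity) hvlow _
  have hnum : (0 : ℝ) ≤ (n : ℝ) * C₀ + C₁ := by positivity
  calc ((n : ℝ) * C₀ + C₁) / ‖v‖ ^ (n + 1)
      ≤ ((n : ℝ) * C₀ + C₁) / (‖y - x₀‖ / 2) ^ (n + 1) :=
        div_le_div_of_nonneg_left hnum (by positivity) hpow
    _ = 2 ^ (n + 1) * ((n : ℝ) * C₀ + C₁) / ‖y - x₀‖ ^ (n + 1) := by
        rw [div_pow]
        rw [div_div_eq_mul_div]
        ring
end

section
/- Let φ be a Schwartz function on ℝⁿ and φ_t(x) := t^{-n}φ(x/t). There exists C > 0 depending only on n and φ such that for every ball B(x₀, r), all x, y ∈ B(x₀, r), every z ∉ B(x₀, 2r), and every t > 0, |∂/∂t(φ_t(x − z) − φ_t(y − z))| ≤ C |x − y| / (t^{3/2} |z − x₀|^{n + 1/2}). -/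
open MeasureTheory Metric

section Aux

lemma schwartz_decay_rpow {E F : Type*} [NormedAddCommGroup E] [NormedSpace ℝ E]
    [NormedAddCommGroup F] [NormedSpace ℝ F]
    (φ : SchwartzMap E F) (m k : ℕ) (e : ℝ) (he0 : 0 ≤ e) (hek : e ≤ k) :
    ∃ M > 0, ∀ u : E, 0 < ‖u‖ →
      ‖iteratedFDeriv ℝ m φ u‖ ≤ M * ‖u‖ ^ (-e) := by
  obtain ⟨M₀, hM₀pos, hM₀⟩ := φ.decay 0 m
  obtain ⟨Mk, hMkpos, hMk⟩ := φ.decay k m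
  refine ⟨max M₀ Mk, lt_max_of_lt_left hM₀pos, fun u hu => ?_⟩
  rcases le_or_gt 1 ‖u‖ with h1 | h1
  · have h2 : ‖iteratedFDeriv ℝ m φ u‖ ≤ Mk * ‖u‖ ^ (-(k : ℝ)) := by
      rw [Real.rpow_neg hu.le, Real.rpow_natCast, mul_comm Mk, ← div_eq_inv_mul,
        le_div_iff₀ (by positivity)]
      nlinarith [hMk u]
    calc ‖iteratedFDeriv ℝ m φ u‖ ≤ Mk * ‖u‖ ^ (-(k : ℝ)) := h2
      _ ≤ max M₀ Mk * ‖u‖ ^ (-e) := by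
          apply mul_le_mul (le_max_right _ _)
            (Real.rpow_le_rpow_of_exponent_le h1 (by linarith)) (by positivity)
            (by positivity)
  · have h2 : ‖iteratedFDeriv ℝ m φ u‖ ≤ M₀ := by simpa using hM₀ u
    have h3 : (1 : ℝ) ≤ ‖u‖ ^ (-e) :=
      Real.one_le_rpow_of_pos_of_le_one_of_nonpos hu h1.le (by linarith)
    calc ‖iteratedFDeriv ℝ m φ u‖ ≤ M₀ := h2
      _ = M₀ * 1 := by ring
      _ ≤ max M₀ Mk * ‖u‖ ^ (-e) := by
          apply mul_le_mul (le_max_left _ _) h3 one_pos.le (by positivity)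

lemma key_arith (n : ℕ) (t W M₁ M₂ F₁ F₂ : ℝ) (ht : 0 < t) (hW : 0 < W)
    (hF₁ : 0 ≤ F₁) (hF₂ : 0 ≤ F₂)
    (h1 : F₁ ≤ M₁ * (t⁻¹ * W) ^ (-((n : ℝ) + 1 / 2)))
    (h2 : F₂ ≤ M₂ * (t⁻¹ * W) ^ (-((n : ℝ) + 3 / 2))) :
    ((n : ℝ) + 1) * t ^ (-(n : ℝ) - 2) * F₁ + t ^ (-(n : ℝ) - 3) * W * F₂
      ≤ (((n : ℝ) + 1) * M₁ + M₂) * (t ^ (-(3 : ℝ) / 2) * W ^ (-((n : ℝ) + 1 / 2))) := by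
  have hti : (0:ℝ) < t⁻¹ := by positivity
  have key : ∀ e : ℝ, (t⁻¹ * W) ^ (-e) = t ^ e * W ^ (-e) := by
    intro e
    rw [Real.mul_rpow hti.le hW.le, Real.inv_rpow ht.le, ← Real.rpow_neg ht.le, neg_neg]
  have e1 : t ^ (-(n : ℝ) - 2) * (t⁻¹ * W) ^ (-((n : ℝ) + 1 / 2))
      = t ^ (-(3 : ℝ) / 2) * W ^ (-((n : ℝ) + 1 / 2)) := by
    rw [key, ← mul_assoc, ← Real.rpow_add ht,
      show (-(n : ℝ) - 2 + ((n : ℝ) + 1 / 2)) = -(3:ℝ)/2 from by ring]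
  have e2 : t ^ (-(n : ℝ) - 3) * W * (t⁻¹ * W) ^ (-((n : ℝ) + 3 / 2))
      = t ^ (-(3 : ℝ) / 2) * W ^ (-((n : ℝ) + 1 / 2)) := by
    rw [key, show t ^ (-(n : ℝ) - 3) * W * (t ^ ((n:ℝ) + 3/2) * W ^ (-((n : ℝ) + 3 / 2)))
        = (t ^ (-(n : ℝ) - 3) * t ^ ((n:ℝ) + 3/2)) * (W ^ (1:ℝ) * W ^ (-((n : ℝ) + 3 / 2)))
        from by rw [Real.rpow_one]; ring,
      ← Real.rpow_add ht, ← Real.rpow_add hW,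
      show (-(n : ℝ) - 3 + ((n : ℝ) + 3 / 2)) = -(3:ℝ)/2 from by ring,
      show (1 : ℝ) + -((n : ℝ) + 3 / 2) = -((n : ℝ) + 1/2) from by ring]
  calc ((n : ℝ) + 1) * t ^ (-(n : ℝ) - 2) * F₁ + t ^ (-(n : ℝ) - 3) * W * F₂
      ≤ ((n : ℝ) + 1) * t ^ (-(n : ℝ) - 2) * (M₁ * (t⁻¹ * W) ^ (-((n : ℝ) + 1 / 2)))
        + t ^ (-(n : ℝ) - 3) * W * (M₂ * (t⁻¹ * W) ^ (-((n : ℝ) + 3 / 2))) := by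
        gcongr <;> positivity
    _ = ((n : ℝ) + 1) * M₁ * (t ^ (-(n : ℝ) - 2) * (t⁻¹ * W) ^ (-((n : ℝ) + 1 / 2)))
        + M₂ * (t ^ (-(n : ℝ) - 3) * W * (t⁻¹ * W) ^ (-((n : ℝ) + 3 / 2))) := by ring
    _ = (((n : ℝ) + 1) * M₁ + M₂) * (t ^ (-(3 : ℝ) / 2) * W ^ (-((n : ℝ) + 1 / 2))) := by
        rw [e1, e2]; ring

variable {n : ℕ} (φ : SchwartzMap (EuclideanSpace ℝ (Fin n)) ℝ)

lemma dil_hasDerivAt (w : EuclideanSpace ℝ (Fin n)) (t : ℝ) (ht : 0 < t) :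
    HasDerivAt (fun s : ℝ => schwartzDil φ s w)
      (((-(n : ℤ)) * t ^ (-(n : ℤ) - 1) : ℝ) * φ (t⁻¹ • w)
        + t ^ (-(n : ℤ)) * ((fderiv ℝ φ (t⁻¹ • w)) ((-(t ^ 2)⁻¹) • w))) t := by
  have h1 : HasDerivAt (fun s : ℝ => s ^ (-(n : ℤ)))
      ((-(n : ℤ)) * t ^ (-(n : ℤ) - 1)) t := by
    have := hasDerivAt_zpow (-(n : ℤ)) t (Or.inl ht.ne')
    push_cast at this ⊢
    exact this
  have h2 : HasDerivAt (fun s : ℝ => s⁻¹ • w) ((-(t ^ 2)⁻¹) • w) t :=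
    (hasDerivAt_inv ht.ne').smul_const w
  have hφd : DifferentiableAt ℝ φ (t⁻¹ • w) := (φ.differentiable).differentiableAt
  have h3 : HasDerivAt (fun s : ℝ => φ (s⁻¹ • w))
      ((fderiv ℝ φ (t⁻¹ • w)) ((-(t ^ 2)⁻¹) • w)) t :=
    hφd.hasFDerivAt.comp_hasDerivAt t h2
  exact h1.mul h3

lemma spatial_hasFDerivAt (t a b : ℝ) (w : EuclideanSpace ℝ (Fin n)) :
    HasFDerivAt (fun v : EuclideanSpace ℝ (Fin n) =>
        a * φ (t⁻¹ • v) + b * (fderiv ℝ φ (t⁻¹ • v)) v)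
      (a • ((fderiv ℝ φ (t⁻¹ • w)).comp
          ((t⁻¹ : ℝ) • ContinuousLinearMap.id ℝ (EuclideanSpace ℝ (Fin n))))
        + b • (((fderiv ℝ φ (t⁻¹ • w)).comp
            (ContinuousLinearMap.id ℝ (EuclideanSpace ℝ (Fin n))))
          + (((fderiv ℝ (fderiv ℝ φ) (t⁻¹ • w)).comp
              ((t⁻¹ : ℝ) • ContinuousLinearMap.id ℝ (EuclideanSpace ℝ (Fin n)))).flip w))) w := by
  have hL : HasFDerivAt (fun v : EuclideanSpace ℝ (Fin n) => t⁻¹ • v)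
      ((t⁻¹ : ℝ) • ContinuousLinearMap.id ℝ (EuclideanSpace ℝ (Fin n))) w :=
    ((t⁻¹ : ℝ) • ContinuousLinearMap.id ℝ (EuclideanSpace ℝ (Fin n))).hasFDerivAt
  have hφ1 : HasFDerivAt (fun v : EuclideanSpace ℝ (Fin n) => φ (t⁻¹ • v))
      ((fderiv ℝ φ (t⁻¹ • w)).comp
        ((t⁻¹ : ℝ) • ContinuousLinearMap.id ℝ (EuclideanSpace ℝ (Fin n)))) w :=
    (φ.differentiable.differentiableAt.hasFDerivAt).comp w hL
  have hsm : ContDiff ℝ 1 (fderiv ℝ φ) :=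
    (φ.smooth ⊤).fderiv_right (WithTop.coe_le_coe.mpr le_top)
  have hd2 : DifferentiableAt ℝ (fderiv ℝ φ) (t⁻¹ • w) :=
    (hsm.differentiable one_ne_zero).differentiableAt
  have hG : HasFDerivAt (fun v : EuclideanSpace ℝ (Fin n) => fderiv ℝ φ (t⁻¹ • v))
      ((fderiv ℝ (fderiv ℝ φ) (t⁻¹ • w)).comp
        ((t⁻¹ : ℝ) • ContinuousLinearMap.id ℝ (EuclideanSpace ℝ (Fin n)))) w :=
    hd2.hasFDerivAt.comp w hL
  have happ : HasFDerivAt (fun v : EuclideanSpace ℝ (Fin n) => (fderiv ℝ φ (t⁻¹ • v)) v)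
      ((fderiv ℝ φ (t⁻¹ • w)).comp (ContinuousLinearMap.id ℝ (EuclideanSpace ℝ (Fin n)))
        + ((fderiv ℝ (fderiv ℝ φ) (t⁻¹ • w)).comp
            ((t⁻¹ : ℝ) • ContinuousLinearMap.id ℝ (EuclideanSpace ℝ (Fin n)))).flip w) w :=
    hG.clm_apply (hasFDerivAt_id w)
  exact (hφ1.const_mul a).add (happ.const_mul b)

end Aux

set_option maxHeartbeats 1000000 in
theorem stmt3 (n : ℕ) (φ : SchwartzMap (EuclideanSpace ℝ (Fin n)) ℝ) :
    ∃ C > 0, ∀ (x₀ : EuclideanSpace ℝ (Fin n)) (r : ℝ), 0 < r →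
      ∀ x ∈ ball x₀ r, ∀ y ∈ ball x₀ r, ∀ z ∉ ball x₀ (2 * r), ∀ t : ℝ, 0 < t →
        |deriv (fun s : ℝ => schwartzDil φ s (x - z) - schwartzDil φ s (y - z)) t|
          ≤ C * ‖x - y‖ / (t ^ ((3 : ℝ) / 2) * ‖z - x₀‖ ^ ((n : ℝ) + 1 / 2)) := by
  classical
  obtain ⟨M₁, hM₁pos, hM₁⟩ := schwartz_decay_rpow φ 1 (n + 1) ((n : ℝ) + 1 / 2)
    (by positivity) (by push_cast; linarith)
  obtain ⟨M₂, hM₂pos, hM₂⟩ := schwartz_decay_rpow φ 2 (n + 2) ((n : ℝ) + 3 / 2)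
    (by positivity) (by push_cast; linarith)
  set C₀ : ℝ := (((n : ℝ) + 1) * M₁ + M₂) * (2 : ℝ) ^ ((n : ℝ) + 1 / 2) with hC₀def
  have hC₀pos : 0 < C₀ := by positivity
  refine ⟨C₀, hC₀pos, fun x₀ r hr x hx y hy z hz t ht => ?_⟩
  have hR : 2 * r ≤ ‖z - x₀‖ := by
    rw [mem_ball, not_lt] at hz
    rwa [← dist_eq_norm]
  set R : ℝ := ‖z - x₀‖ with hRdef
  have hRpos : 0 < R := by dsimp only [R]; linarith
  set a : ℝ := ((-(n : ℤ)) * t ^ (-(n : ℤ) - 1) : ℝ) with hadef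
  set b : ℝ := (t ^ (-(n : ℤ)) * (-(t ^ 2)⁻¹) : ℝ) with hbdef
  set h : EuclideanSpace ℝ (Fin n) → ℝ :=
    fun v => a * φ (t⁻¹ • v) + b * (fderiv ℝ φ (t⁻¹ • v)) v with hhdef
  have hderiv : deriv (fun s : ℝ => schwartzDil φ s (x - z) - schwartzDil φ s (y - z)) t
      = h (x - z) - h (y - z) := by
    have h1 := dil_hasDerivAt φ (x - z) t ht
    have h2 := dil_hasDerivAt φ (y - z) t ht
    rw [show (fun s : ℝ => schwartzDil φ s (x - z) - schwartzDil φ s (y - z)) = (fun s => schwartzDil φ s (x - z)) - (fun s => schwartzDil φ s (y - z)) from rfl, (h1.sub h2).deriv]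
    simp only [hhdef, hadef, hbdef, _root_.map_smul, smul_eq_mul]
    ring
  rw [hderiv]
  set S : Set (EuclideanSpace ℝ (Fin n)) := closedBall (x₀ - z) r with hSdef
  have hxS : x - z ∈ S := by
    simp only [hSdef, mem_closedBall, dist_eq_norm, sub_sub_sub_cancel_right]
    rw [← dist_eq_norm]
    exact (mem_ball.mp hx).le
  have hyS : y - z ∈ S := by
    simp only [hSdef, mem_closedBall, dist_eq_norm, sub_sub_sub_cancel_right]
    rw [← dist_eq_norm]
    exact (mem_ball.mp hy).le
  have hWlb : ∀ w ∈ S, R / 2 ≤ ‖w‖ := by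
    intro w hw
    have h1 : dist w (x₀ - z) ≤ r := mem_closedBall.mp hw
    have h2 : ‖x₀ - z‖ ≤ ‖x₀ - z - w‖ + ‖w‖ := by
      have := norm_add_le (x₀ - z - w) w
      simpa using this
    rw [dist_eq_norm, ← norm_neg (w - (x₀ - z))] at h1
    have h3 : ‖x₀ - z‖ = R := by rw [hRdef, norm_sub_rev]
    have h4 : -(w - (x₀ - z)) = x₀ - z - w := by abel
    rw [h4] at h1
    linarith
  set K : ℝ := C₀ * (t ^ (-(3 : ℝ) / 2) * R ^ (-((n : ℝ) + 1 / 2))) with hKdef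
  have hti : (0:ℝ) < t⁻¹ := by positivity
  -- |a| and |b| bounds
  have hzp1 : (t : ℝ) ^ (-(n : ℤ) - 1) = t ^ (-(n : ℝ) - 1) := by
    rw [← Real.rpow_intCast t (-(n : ℤ) - 1)]
    push_cast
    ring_nf
  have habs : |a| ≤ (n : ℝ) * t ^ (-(n : ℝ) - 1) := by
    rw [hadef, hzp1]
    push_cast
    rw [abs_mul, abs_neg, abs_of_nonneg (by positivity : (0:ℝ) ≤ (n:ℝ)),
      abs_of_nonneg (Real.rpow_nonneg ht.le _)]
  have hbabs : |b| = t ^ (-(n : ℝ) - 2) := by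
    rw [hbdef, abs_mul, abs_neg, abs_inv, abs_of_nonneg (zpow_nonneg ht.le _),
      abs_of_nonneg (by positivity : (0:ℝ) ≤ t ^ 2),
      ← Real.rpow_intCast t (-(n : ℤ)), ← Real.rpow_natCast t 2,
      ← Real.rpow_neg ht.le, ← Real.rpow_add ht]
    push_cast
    ring_nf
  have hmvt : ‖h (x - z) - h (y - z)‖ ≤ K * ‖(x - z) - (y - z)‖ := by
    have hconv : Convex ℝ S := convex_closedBall _ _
    refine Convex.norm_image_sub_le_of_norm_hasFDerivWithin_le
      (f := h) (f' := fun w =>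
        a • ((fderiv ℝ φ (t⁻¹ • w)).comp
            ((t⁻¹ : ℝ) • ContinuousLinearMap.id ℝ (EuclideanSpace ℝ (Fin n))))
        + b • (((fderiv ℝ φ (t⁻¹ • w)).comp
              (ContinuousLinearMap.id ℝ (EuclideanSpace ℝ (Fin n))))
          + (((fderiv ℝ (fderiv ℝ φ) (t⁻¹ • w)).comp
              ((t⁻¹ : ℝ) • ContinuousLinearMap.id ℝ (EuclideanSpace ℝ (Fin n)))).flip w)))
      (fun w _ => (spatial_hasFDerivAt φ t a b w).hasFDerivWithinAt)
      (fun w hw => ?_) hconv hyS hxS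
    have hWpos : 0 < ‖w‖ := lt_of_lt_of_le (by positivity) (hWlb w hw)
    have hunorm : ‖t⁻¹ • w‖ = t⁻¹ * ‖w‖ := by
      rw [norm_smul, Real.norm_eq_abs, abs_of_pos hti]
    have hu : 0 < ‖t⁻¹ • w‖ := by rw [hunorm]; positivity
    have hF₁' := hM₁ (t⁻¹ • w) hu
    have hF₂' := hM₂ (t⁻¹ • w) hu
    have hF₁norm : ‖iteratedFDeriv ℝ 1 (⇑φ) (t⁻¹ • w)‖ = ‖fderiv ℝ φ (t⁻¹ • w)‖ := by
      rw [← norm_iteratedFDeriv_fderiv, norm_iteratedFDeriv_zero]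
    have hF₂norm : ‖iteratedFDeriv ℝ 2 (⇑φ) (t⁻¹ • w)‖
        = ‖fderiv ℝ (fderiv ℝ φ) (t⁻¹ • w)‖ := by
      rw [← norm_iteratedFDeriv_fderiv, ← norm_iteratedFDeriv_fderiv,
        norm_iteratedFDeriv_zero]
    rw [hF₁norm, hunorm] at hF₁'
    rw [hF₂norm, hunorm] at hF₂'
    set F₁ : ℝ := ‖fderiv ℝ φ (t⁻¹ • w)‖ with hF₁def
    set F₂ : ℝ := ‖fderiv ℝ (fderiv ℝ φ) (t⁻¹ • w)‖ with hF₂def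
    have hLnorm : ‖(t⁻¹ : ℝ) • ContinuousLinearMap.id ℝ (EuclideanSpace ℝ (Fin n))‖ ≤ t⁻¹ := by
      refine (ContinuousLinearMap.opNorm_smul_le _ _).trans ?_
      rw [Real.norm_eq_abs, abs_of_pos hti]
      calc t⁻¹ * ‖ContinuousLinearMap.id ℝ (EuclideanSpace ℝ (Fin n))‖ ≤ t⁻¹ * 1 := by
            gcongr
            exact ContinuousLinearMap.norm_id_le
        _ = t⁻¹ := by ring
    -- structural bound
    have hstruct : ‖a • ((fderiv ℝ φ (t⁻¹ • w)).comp
            ((t⁻¹ : ℝ) • ContinuousLinearMap.id ℝ (EuclideanSpace ℝ (Fin n))))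
        + b • (((fderiv ℝ φ (t⁻¹ • w)).comp
              (ContinuousLinearMap.id ℝ (EuclideanSpace ℝ (Fin n))))
          + (((fderiv ℝ (fderiv ℝ φ) (t⁻¹ • w)).comp
              ((t⁻¹ : ℝ) • ContinuousLinearMap.id ℝ (EuclideanSpace ℝ (Fin n)))).flip w))‖
        ≤ |a| * (F₁ * t⁻¹) + |b| * (F₁ + F₂ * t⁻¹ * ‖w‖) := by
      have n1 : ‖(fderiv ℝ φ (t⁻¹ • w)).comp
          ((t⁻¹ : ℝ) • ContinuousLinearMap.id ℝ (EuclideanSpace ℝ (Fin n)))‖ ≤ F₁ * t⁻¹ :=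
        (ContinuousLinearMap.opNorm_comp_le _ _).trans (by gcongr)
      have n2 : ‖(fderiv ℝ φ (t⁻¹ • w)).comp
          (ContinuousLinearMap.id ℝ (EuclideanSpace ℝ (Fin n)))‖ ≤ F₁ := by
        refine (ContinuousLinearMap.opNorm_comp_le _ _).trans ?_
        calc F₁ * ‖ContinuousLinearMap.id ℝ (EuclideanSpace ℝ (Fin n))‖ ≤ F₁ * 1 := by
              gcongr
              exact ContinuousLinearMap.norm_id_le
          _ = F₁ := by ring
      have n3 : ‖(((fderiv ℝ (fderiv ℝ φ) (t⁻¹ • w)).comp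
              ((t⁻¹ : ℝ) • ContinuousLinearMap.id ℝ (EuclideanSpace ℝ (Fin n)))).flip w)‖
          ≤ F₂ * t⁻¹ * ‖w‖ := by
        refine (ContinuousLinearMap.le_opNorm _ w).trans ?_
        gcongr
        rw [ContinuousLinearMap.opNorm_flip]
        exact (ContinuousLinearMap.opNorm_comp_le _ _).trans (by gcongr)
      refine (norm_add_le _ _).trans ?_
      have e1 : ‖a • ((fderiv ℝ φ (t⁻¹ • w)).comp
          ((t⁻¹ : ℝ) • ContinuousLinearMap.id ℝ (EuclideanSpace ℝ (Fin n))))‖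
          ≤ |a| * (F₁ * t⁻¹) := by
        refine (ContinuousLinearMap.opNorm_smul_le _ _).trans ?_
        rw [Real.norm_eq_abs]
        exact mul_le_mul_of_nonneg_left n1 (abs_nonneg a)
      have e2 : ‖b • (((fderiv ℝ φ (t⁻¹ • w)).comp
              (ContinuousLinearMap.id ℝ (EuclideanSpace ℝ (Fin n))))
          + (((fderiv ℝ (fderiv ℝ φ) (t⁻¹ • w)).comp
              ((t⁻¹ : ℝ) • ContinuousLinearMap.id ℝ (EuclideanSpace ℝ (Fin n)))).flip w))‖
          ≤ |b| * (F₁ + F₂ * t⁻¹ * ‖w‖) := by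
        refine (ContinuousLinearMap.opNorm_smul_le _ _).trans ?_
        rw [Real.norm_eq_abs]
        refine mul_le_mul_of_nonneg_left ?_ (abs_nonneg b)
        exact (norm_add_le _ _).trans (add_le_add n2 n3)
      exact add_le_add e1 e2
    refine hstruct.trans ?_
    -- turn into the key_arith shape
    have hmul1 : t ^ (-(n:ℝ) - 1) * t⁻¹ = t ^ (-(n:ℝ) - 2) := by
      rw [← Real.rpow_neg_one t, ← Real.rpow_add ht]
      congr 1
      ring
    have hmul2 : t ^ (-(n:ℝ) - 2) * t⁻¹ = t ^ (-(n:ℝ) - 3) := by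
      rw [← Real.rpow_neg_one t, ← Real.rpow_add ht]
      congr 1
      ring
    have step1 : |a| * (F₁ * t⁻¹) + |b| * (F₁ + F₂ * t⁻¹ * ‖w‖)
        ≤ ((n : ℝ) + 1) * t ^ (-(n : ℝ) - 2) * F₁ + t ^ (-(n : ℝ) - 3) * ‖w‖ * F₂ := by
      have e : (n : ℝ) * t ^ (-(n:ℝ) - 1) * (F₁ * t⁻¹)
          + t ^ (-(n:ℝ) - 2) * (F₁ + F₂ * t⁻¹ * ‖w‖)
          = ((n : ℝ) + 1) * t ^ (-(n : ℝ) - 2) * F₁ + t ^ (-(n : ℝ) - 3) * ‖w‖ * F₂ := by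
        rw [← hmul2, ← hmul1]
        ring
      rw [← e, hbabs]
      have hF₁t : 0 ≤ F₁ * t⁻¹ := by positivity
      nlinarith [abs_nonneg a, mul_le_mul_of_nonneg_right habs hF₁t]
    refine step1.trans ?_
    have step2 := key_arith n t ‖w‖ M₁ M₂ F₁ F₂ ht hWpos (norm_nonneg _) (norm_nonneg (fderiv ℝ (fderiv ℝ φ) (t⁻¹ • w)))
      hF₁' hF₂'
    refine step2.trans ?_
    -- pass from ‖w‖ to R
    have hW2 : ‖w‖ ^ (-((n : ℝ) + 1 / 2)) ≤ (2:ℝ) ^ ((n : ℝ) + 1/2) * R ^ (-((n : ℝ) + 1 / 2)) := by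
      have h1 : ‖w‖ ^ (-((n : ℝ) + 1 / 2)) ≤ (R / 2) ^ (-((n : ℝ) + 1 / 2)) :=
        Real.rpow_le_rpow_of_nonpos (by positivity) (hWlb w hw)
          (by simp only [neg_nonpos]; positivity)
      refine h1.trans_eq ?_
      rw [div_eq_mul_inv, Real.mul_rpow hRpos.le (by positivity),
        Real.inv_rpow (by norm_num : (0:ℝ) ≤ 2), ← Real.rpow_neg (by norm_num : (0:ℝ) ≤ 2),
        neg_neg]
      ring
    calc (((n : ℝ) + 1) * M₁ + M₂) * (t ^ (-(3 : ℝ) / 2) * ‖w‖ ^ (-((n : ℝ) + 1 / 2)))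
        ≤ (((n : ℝ) + 1) * M₁ + M₂)
          * (t ^ (-(3 : ℝ) / 2) * ((2:ℝ) ^ ((n : ℝ) + 1/2) * R ^ (-((n : ℝ) + 1 / 2)))) := by
          gcongr
      _ = K := by rw [hKdef, hC₀def]; ring
  -- conclude
  have hxy : (x - z) - (y - z) = x - y := by abel
  rw [hxy] at hmvt
  calc |h (x - z) - h (y - z)| = ‖h (x - z) - h (y - z)‖ := (Real.norm_eq_abs _).symm
    _ ≤ K * ‖x - y‖ := hmvt
    _ = C₀ * ‖x - y‖ / (t ^ ((3 : ℝ) / 2) * R ^ ((n : ℝ) + 1 / 2)) := by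
        rw [hKdef]
        have h1 : t ^ (-(3:ℝ)/2) = (t ^ ((3:ℝ)/2))⁻¹ := by
          rw [← Real.rpow_neg ht.le]
          norm_num
        have h2 : R ^ (-((n:ℝ) + 1/2)) = (R ^ ((n:ℝ) + 1/2))⁻¹ := Real.rpow_neg hRpos.le _
        have ht' : t ^ ((3:ℝ)/2) ≠ 0 := by positivity
        have hR' : R ^ ((n:ℝ)+1/2) ≠ 0 := by positivity
        rw [h1, h2]
        field_simp
end

section
/- Let φ be a Schwartz function on ℝⁿ, {a_i}_{i∈ℤ} a δ-lacunary sequence of positive numbers (a_{i+1}/a_i ≥ δ > 1 for all i), and {v_i}_{i∈ℤ} a bounded sequence of complex numbers. Then there exists C > 0 depending only on n, φ, and ‖v‖_{ℓ∞} (not on N₁, N₂) such that for all integers N₁ < N₂ and all y ≠ 0, |∑_{i=N₁}^{N₂} v_i (φ_{a_{i+1}}(y) − φ_{a_i}(y))| ≤ C / |y|ⁿ. -/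
open MeasureTheory Metric Finset

lemma geo_sum_aux (δ : ℝ) (hδ : 1 < δ) (F : Finset ℤ) (f : ℤ → ℕ)
    (hf : ∀ x ∈ F, ∀ y ∈ F, f x = f y → x = y) :
    ∑ i ∈ F, (δ⁻¹ : ℝ) ^ (f i) ≤ (1 - δ⁻¹)⁻¹ := by
  have hδ0 : (0:ℝ) < δ := lt_trans one_pos hδ
  have h0 : (0:ℝ) ≤ δ⁻¹ := by positivity
  have h1 : δ⁻¹ < 1 := inv_lt_one_of_one_lt₀ hδ
  calc ∑ i ∈ F, (δ⁻¹:ℝ)^(f i) = ∑ k ∈ F.image f, (δ⁻¹:ℝ)^k := (Finset.sum_image hf).symm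
    _ ≤ ∑' k : ℕ, (δ⁻¹:ℝ)^k := Summable.sum_le_tsum _ (fun k _ => by positivity)
        (summable_geometric_of_lt_one h0 h1)
    _ = (1 - δ⁻¹)⁻¹ := tsum_geometric_of_lt_one h0 h1

lemma lac_grow (δ : ℝ) (hδ : 1 < δ) (a : ℤ → ℝ) (ha : ∀ i, 0 < a i)
    (hr : ∀ i, δ ≤ a (i + 1) / a i) :
    ∀ i j : ℤ, i ≤ j → a i * δ ^ (j - i).toNat ≤ a j := by
  have key : ∀ (i : ℤ) (k : ℕ), a i * δ ^ k ≤ a (i + k) := by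
    intro i k
    induction k with
    | zero => simp
    | succ k ih =>
      have h1 : δ * a (i + k) ≤ a (i + k + 1) := (le_div_iff₀ (ha (i + k))).mp (hr (i + k))
      have h2 : a i * δ ^ (k + 1) = (a i * δ ^ k) * δ := by ring
      have h3 : (i : ℤ) + (k + 1 : ℕ) = i + k + 1 := by push_cast; ring
      rw [h2, h3]
      calc (a i * δ ^ k) * δ ≤ a (i + k) * δ :=
            mul_le_mul_of_nonneg_right ih (le_of_lt (lt_trans one_pos hδ))
        _ ≤ a (i + k + 1) := by linarith
  intro i j hij
  have h : (i : ℤ) + ((j - i).toNat : ℕ) = j := by omega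
  have := key i (j - i).toNat
  rwa [h] at this

lemma sum_min_le (δ : ℝ) (hδ : 1 < δ) (a : ℤ → ℝ) (ha : ∀ i, 0 < a i)
    (hr : ∀ i, δ ≤ a (i + 1) / a i) (r : ℝ) (hrpos : 0 < r) (F : Finset ℤ) :
    ∑ i ∈ F, min (a i / r) (r / a i) ≤ 2 * (1 - δ⁻¹)⁻¹ := by
  have hδ0 : (0:ℝ) < δ := lt_trans one_pos hδ
  have h1 : (δ:ℝ)⁻¹ < 1 := inv_lt_one_of_one_lt₀ hδ
  have hG : (0:ℝ) ≤ (1 - δ⁻¹)⁻¹ := by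
    apply inv_nonneg.mpr; linarith
  rw [← Finset.sum_filter_add_sum_filter_not F (fun i => a i ≤ r)]
  have part1 : ∑ i ∈ F.filter (fun i => a i ≤ r), min (a i / r) (r / a i)
      ≤ (1 - δ⁻¹)⁻¹ := by
    set F₁ := F.filter (fun i => a i ≤ r) with hF₁
    rcases F₁.eq_empty_or_nonempty with h | h
    · simp [h, hG]
    · set M := F₁.max' h with hM
      have haM : a M ≤ r := (Finset.mem_filter.mp (F₁.max'_mem h)).2
      calc ∑ i ∈ F₁, min (a i / r) (r / a i)
          ≤ ∑ i ∈ F₁, (δ⁻¹:ℝ) ^ (M - i).toNat := by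
            apply Finset.sum_le_sum
            intro i hi
            have hiM : i ≤ M := Finset.le_max' _ _ hi
            have hgrow : a i * δ ^ (M - i).toNat ≤ a M := lac_grow δ hδ a ha hr i M hiM
            have hpow : (0:ℝ) < δ ^ (M - i).toNat := by positivity
            have key : a i ≤ r * (δ⁻¹:ℝ) ^ (M - i).toNat := by
              have h2 : a i ≤ r / δ ^ (M - i).toNat :=
                (le_div_iff₀ hpow).mpr (hgrow.trans haM)
              simpa [inv_pow, div_eq_mul_inv] using h2
            refine le_trans (min_le_left _ _) ?_
            rw [div_le_iff₀ hrpos]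
            linarith [key]
        _ ≤ (1 - δ⁻¹)⁻¹ := by
            apply geo_sum_aux δ hδ
            intro x hx y hy hxy
            have hxM : x ≤ M := Finset.le_max' _ _ hx
            have hyM : y ≤ M := Finset.le_max' _ _ hy
            omega
  have part2 : ∑ i ∈ F.filter (fun i => ¬ a i ≤ r), min (a i / r) (r / a i)
      ≤ (1 - δ⁻¹)⁻¹ := by
    set F₂ := F.filter (fun i => ¬ a i ≤ r) with hF₂
    rcases F₂.eq_empty_or_nonempty with h | h
    · simp [h, hG]
    · set m := F₂.min' h with hm
      have ham : r ≤ a m := le_of_lt (lt_of_not_ge (Finset.mem_filter.mp (F₂.min'_mem h)).2)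
      calc ∑ i ∈ F₂, min (a i / r) (r / a i)
          ≤ ∑ i ∈ F₂, (δ⁻¹:ℝ) ^ (i - m).toNat := by
            apply Finset.sum_le_sum
            intro i hi
            have him : m ≤ i := Finset.min'_le _ _ hi
            have hgrow : a m * δ ^ (i - m).toNat ≤ a i := lac_grow δ hδ a ha hr m i him
            have hpow : (0:ℝ) < δ ^ (i - m).toNat := by positivity
            have key : r ≤ a i * (δ⁻¹:ℝ) ^ (i - m).toNat := by
              have h2 : r ≤ a i / δ ^ (i - m).toNat := by
                rw [le_div_iff₀ hpow]
                calc r * δ ^ (i - m).toNat ≤ a m * δ ^ (i - m).toNat :=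
                      mul_le_mul_of_nonneg_right ham hpow.le
                  _ ≤ a i := hgrow
              simpa [inv_pow, div_eq_mul_inv] using h2
            refine le_trans (min_le_right _ _) ?_
            rw [div_le_iff₀ (ha i)]
            linarith [key]
        _ ≤ (1 - δ⁻¹)⁻¹ := by
            apply geo_sum_aux δ hδ
            intro x hx y hy hxy
            have hxm : m ≤ x := Finset.min'_le _ _ hx
            have hym : m ≤ y := Finset.min'_le _ _ hy
            omega
  linarith

lemma dil_bound (m : ℕ) (φ : SchwartzMap (EuclideanSpace ℝ (Fin (m + 1))) ℝ)
    (t : ℝ) (ht : 0 < t) (y : EuclideanSpace ℝ (Fin (m + 1))) (hy : y ≠ 0) :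
    |schwartzDil φ t y| ≤
      ((SchwartzMap.seminorm ℝ 0 0 φ + SchwartzMap.seminorm ℝ (m + 2) 0 φ) / ‖y‖ ^ (m + 1))
        * min (t / ‖y‖) (‖y‖ / t) := by
  set r := ‖y‖ with hrdef
  have hr : 0 < r := norm_pos_iff.mpr hy
  set x := t⁻¹ • y with hxdef
  have hx : ‖x‖ = r / t := by
    rw [hxdef, norm_smul, norm_inv, Real.norm_eq_abs, abs_of_pos ht, div_eq_inv_mul]
  set A := SchwartzMap.seminorm ℝ 0 0 φ with hAdef
  set B := SchwartzMap.seminorm ℝ (m + 2) 0 φ with hBdef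
  have hA0 : 0 ≤ A := apply_nonneg _ _
  have hB0 : 0 ≤ B := apply_nonneg _ _
  have hA : |φ x| ≤ A := by
    have := φ.norm_le_seminorm ℝ x
    rwa [Real.norm_eq_abs] at this
  have hB : (r / t) ^ (m + 2) * |φ x| ≤ B := by
    have := φ.le_seminorm ℝ (m + 2) 0 x
    simpa [norm_iteratedFDeriv_zero, Real.norm_eq_abs, hx] using this
  have habs : |schwartzDil φ t y| = (t ^ (m + 1))⁻¹ * |φ x| := by
    rw [schwartzDil, abs_mul]
    congr 1
    rw [zpow_neg, abs_inv]
    congr 1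
    rw [← zpow_natCast t (m + 1), abs_of_pos (by positivity)]
  rw [habs]
  have htne : t ≠ 0 := ht.ne'
  have hrne : r ≠ 0 := hr.ne'
  rcases le_total t r with h | h
  · have hmin : min (t / r) (r / t) = t / r := by
      apply min_eq_left
      rw [div_le_div_iff₀ hr ht]
      nlinarith
    rw [hmin]
    have hφx : |φ x| ≤ B * (t / r) ^ (m + 2) := by
      have hone : (r / t) ^ (m + 2) * (t / r) ^ (m + 2) = 1 := by
        rw [← mul_pow]
        field_simp
        exact one_pow _
      calc |φ x| = ((r / t) ^ (m + 2) * |φ x|) * (t / r) ^ (m + 2) := by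
            rw [mul_comm ((r/t)^(m+2)) (|φ x|), mul_assoc, hone, mul_one]
        _ ≤ B * (t / r) ^ (m + 2) := by
            apply mul_le_mul_of_nonneg_right hB (by positivity)
    calc (t ^ (m + 1))⁻¹ * |φ x| ≤ (t ^ (m + 1))⁻¹ * (B * (t / r) ^ (m + 2)) :=
          mul_le_mul_of_nonneg_left hφx (by positivity)
      _ = (B / r ^ (m + 1)) * (t / r) := by
          rw [div_pow]
          field_simp
          ring
      _ ≤ ((A + B) / r ^ (m + 1)) * (t / r) := by
          apply mul_le_mul_of_nonneg_right _ (by positivity)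
          apply div_le_div_of_nonneg_right _ (by positivity)
          · linarith
  · have hmin : min (t / r) (r / t) = r / t := by
      apply min_eq_right
      rw [div_le_div_iff₀ ht hr]
      nlinarith
    rw [hmin]
    have hmt : r ^ m * t ≤ t ^ (m + 1) := by
      rw [pow_succ]
      exact mul_le_mul_of_nonneg_right (pow_le_pow_left₀ hr.le h m) ht.le
    calc (t ^ (m + 1))⁻¹ * |φ x| ≤ (t ^ (m + 1))⁻¹ * A :=
          mul_le_mul_of_nonneg_left hA (by positivity)
      _ = A / t ^ (m + 1) := by ring
      _ ≤ A / (r ^ m * t) := by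
          apply div_le_div_of_nonneg_left hA0 (by positivity) hmt
      _ = (A / r ^ (m + 1)) * (r / t) := by
          field_simp
          ring
      _ ≤ ((A + B) / r ^ (m + 1)) * (r / t) := by
          apply mul_le_mul_of_nonneg_right _ (by positivity)
          apply div_le_div_of_nonneg_right _ (by positivity)
          · linarith

theorem stmt6 (n : ℕ) (φ : SchwartzMap (EuclideanSpace ℝ (Fin n)) ℝ)
    (δ V : ℝ) (hδ : 1 < δ) (hV : 0 ≤ V) :
    ∃ C > 0, ∀ (a : ℤ → ℝ) (v : ℤ → ℂ),
      (∀ i, 0 < a i) → (∀ i, δ ≤ a (i + 1) / a i) → (∀ i, ‖v i‖ ≤ V) →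
      ∀ N₁ N₂ : ℤ, N₁ < N₂ → ∀ y : EuclideanSpace ℝ (Fin n), y ≠ 0 →
        ‖∑ i ∈ Finset.Icc N₁ N₂,
            v i * ((schwartzDil φ (a (i + 1)) y - schwartzDil φ (a i) y : ℝ) : ℂ)‖
          ≤ C / ‖y‖ ^ n := by
  obtain _ | m := n
  · exact ⟨1, one_pos, fun a v _ _ _ N₁ N₂ _ y hy => absurd (Subsingleton.elim y 0) hy⟩
  set A := SchwartzMap.seminorm ℝ 0 0 φ with hAdef
  set B := SchwartzMap.seminorm ℝ (m + 2) 0 φ with hBdef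
  have hA0 : 0 ≤ A := apply_nonneg _ _
  have hB0 : 0 ≤ B := apply_nonneg _ _
  have h1 : (δ:ℝ)⁻¹ < 1 := inv_lt_one_of_one_lt₀ hδ
  set G := ((1:ℝ) - δ⁻¹)⁻¹ with hGdef
  have hG : (0:ℝ) ≤ G := inv_nonneg.mpr (by linarith)
  refine ⟨V * (A + B) * (4 * G) + 1, by positivity, ?_⟩
  intro a v ha hrat hv N₁ N₂ _ y hy
  set r := ‖y‖ with hrdef
  have hr : 0 < r := norm_pos_iff.mpr hy
  calc ‖∑ i ∈ Finset.Icc N₁ N₂,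
          v i * ((schwartzDil φ (a (i + 1)) y - schwartzDil φ (a i) y : ℝ) : ℂ)‖
      ≤ ∑ i ∈ Finset.Icc N₁ N₂,
          ‖v i * ((schwartzDil φ (a (i + 1)) y - schwartzDil φ (a i) y : ℝ) : ℂ)‖ :=
        norm_sum_le _ _
    _ ≤ ∑ i ∈ Finset.Icc N₁ N₂,
          V * (((A + B) / r ^ (m + 1)) *
            (min (a (i + 1) / r) (r / a (i + 1)) + min (a i / r) (r / a i))) := by
        apply Finset.sum_le_sum
        intro i _
        rw [norm_mul, Complex.norm_real, Real.norm_eq_abs]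
        have hd1 := dil_bound m φ (a (i + 1)) (ha (i + 1)) y hy
        have hd2 := dil_bound m φ (a i) (ha i) y hy
        have habs : |schwartzDil φ (a (i + 1)) y - schwartzDil φ (a i) y|
            ≤ ((A + B) / r ^ (m + 1)) *
              (min (a (i + 1) / r) (r / a (i + 1)) + min (a i / r) (r / a i)) := by
          calc |schwartzDil φ (a (i + 1)) y - schwartzDil φ (a i) y|
              ≤ |schwartzDil φ (a (i + 1)) y| + |schwartzDil φ (a i) y| :=
                abs_sub _ _
            _ ≤ ((A + B) / r ^ (m + 1)) *
                (min (a (i + 1) / r) (r / a (i + 1)) + min (a i / r) (r / a i)) := by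
                rw [mul_add]
                exact add_le_add hd1 hd2
        exact mul_le_mul (hv i) habs (abs_nonneg _)
          hV
    _ = V * ((A + B) / r ^ (m + 1)) *
          ((∑ i ∈ Finset.Icc N₁ N₂, min (a (i + 1) / r) (r / a (i + 1)))
            + ∑ i ∈ Finset.Icc N₁ N₂, min (a i / r) (r / a i)) := by
        rw [← Finset.sum_add_distrib, Finset.mul_sum]
        apply Finset.sum_congr rfl
        intro i _
        ring
    _ ≤ V * ((A + B) / r ^ (m + 1)) * (2 * G + 2 * G) := by
        apply mul_le_mul_of_nonneg_left _ (by positivity)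
        apply add_le_add
        · exact sum_min_le δ hδ (fun i => a (i + 1)) (fun i => ha (i + 1))
            (fun i => hrat (i + 1)) r hr _
        · exact sum_min_le δ hδ a ha hrat r hr _
    _ = (V * (A + B) * (4 * G)) / r ^ (m + 1) := by ring
    _ ≤ (V * (A + B) * (4 * G) + 1) / r ^ (m + 1) := by
        apply div_le_div_of_nonneg_right _ (by positivity)
        · linarith
end

section
/- Let φ be a Schwartz function on ℝⁿ, {a_i}_{i∈ℤ} a δ-lacunary sequence of positive numbers, and {v_i}_{i∈ℤ} a bounded sequence of complex numbers. There exists C > 0 depending only on n, φ, and ‖v‖_{ℓ∞} such that for all integers N₁ < N₂ and all y ≠ 0, |∇K_N(y)| ≤ C / |y|^{n+1}, where K_N(y) := ∑_{i=N₁}^{N₂} v_i(φ_{a_{i+1}}(y) − φ_{a_i}(y)). -/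
open MeasureTheory Metric Finset

lemma lacunary_iter {δ : ℝ} {a : ℤ → ℝ} (hδ : 1 < δ) (ha : ∀ i, 0 < a i)
    (hl : ∀ i, δ ≤ a (i + 1) / a i) (k : ℕ) (i : ℤ) :
    δ ^ k * a i ≤ a (i + k) := by
  induction k generalizing i with
  | zero => simp
  | succ k ih =>
    have h1 := ih i
    have h2 : δ * a (i + k) ≤ a (i + k + 1) := by
      have := hl (i + k)
      rw [le_div_iff₀ (ha _)] at this; linarith
    have hδ0 : (0:ℝ) < δ := lt_trans one_pos hδ
    have : δ ^ (k + 1) * a i = δ * (δ ^ k * a i) := by ring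
    rw [this]
    calc δ * (δ ^ k * a i) ≤ δ * a (i + k) := by nlinarith
      _ ≤ a (i + k + 1) := h2
      _ = a (i + (k + 1 : ℕ)) := by push_cast; ring_nf

lemma sum_geo_le {q : ℝ} (hq0 : 0 ≤ q) (hq1 : q < 1) (T : Finset ℤ) (k : ℤ → ℕ)
    (hk : ∀ x ∈ T, ∀ y ∈ T, k x = k y → x = y) :
    ∑ i ∈ T, q ^ k i ≤ (1 - q)⁻¹ := by
  have him : ∑ m ∈ T.image k, q ^ m = ∑ i ∈ T, q ^ k i :=
    Finset.sum_image hk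
  rw [← him]
  calc ∑ m ∈ T.image k, q ^ m
      ≤ ∑' m : ℕ, q ^ m :=
        Summable.sum_le_tsum _ (fun m _ => pow_nonneg hq0 m) (summable_geometric_of_lt_one hq0 hq1)
    _ = (1 - q)⁻¹ := tsum_geometric_of_lt_one hq0 hq1

lemma lacunary_min_sum {δ : ℝ} (hδ : 1 < δ) {a : ℤ → ℝ} (ha : ∀ i, 0 < a i)
    (hl : ∀ i, δ ≤ a (i + 1) / a i) {r : ℝ} (hr : 0 < r) (S : Finset ℤ) :
    ∑ i ∈ S, min (a i / r) (r / a i) ≤ 2 * (1 - δ⁻¹)⁻¹ := by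
  have hδ0 : (0:ℝ) < δ := lt_trans one_pos hδ
  have hq0 : (0:ℝ) ≤ δ⁻¹ := by positivity
  have hq1 : δ⁻¹ < 1 := inv_lt_one_of_one_lt₀ hδ
  have hinv : (0:ℝ) ≤ (1 - δ⁻¹)⁻¹ := by
    have : (0:ℝ) < 1 - δ⁻¹ := by linarith
    positivity
  rw [← Finset.sum_filter_add_sum_filter_not S (fun i => a i ≤ r)]
  have h1 : ∑ i ∈ S.filter (fun i => a i ≤ r), min (a i / r) (r / a i) ≤ (1 - δ⁻¹)⁻¹ := by
    set T := S.filter (fun i => a i ≤ r) with hT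
    rcases T.eq_empty_or_nonempty with h | hne
    · rw [h]; simpa using hinv
    · set j := T.max' hne with hj
      have hjT : j ∈ T := T.max'_mem hne
      have hja : a j ≤ r := (Finset.mem_filter.mp hjT).2
      have key : ∀ i ∈ T, min (a i / r) (r / a i) ≤ δ⁻¹ ^ (j - i).toNat := by
        intro i hi
        have hij : i ≤ j := Finset.le_max' T i hi
        set k := (j - i).toNat with hk
        have hik : i + (k : ℤ) = j := by omega
        have hiter := lacunary_iter hδ ha hl k i
        rw [hik] at hiter
        have hpk : (0:ℝ) < δ ^ k := by positivity
        have h1 : a i / r ≤ δ⁻¹ ^ k := by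
          rw [inv_pow, div_le_iff₀ hr, inv_mul_eq_div, le_div_iff₀ hpk]
          nlinarith
        exact le_trans (min_le_left _ _) h1
      calc ∑ i ∈ T, min (a i / r) (r / a i) ≤ ∑ i ∈ T, δ⁻¹ ^ (j - i).toNat :=
            Finset.sum_le_sum key
        _ ≤ (1 - δ⁻¹)⁻¹ := by
            apply sum_geo_le hq0 hq1
            intro x hx y hy hxy
            have hxj : x ≤ j := Finset.le_max' T x hx
            have hyj : y ≤ j := Finset.le_max' T y hy
            omega
  have h2 : ∑ i ∈ S.filter (fun i => ¬ a i ≤ r), min (a i / r) (r / a i) ≤ (1 - δ⁻¹)⁻¹ := by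
    set T := S.filter (fun i => ¬ a i ≤ r) with hT
    rcases T.eq_empty_or_nonempty with h | hne
    · rw [h]; simpa using hinv
    · set j := T.min' hne with hj
      have hjT : j ∈ T := T.min'_mem hne
      have hja : r ≤ a j := le_of_lt (lt_of_not_ge (Finset.mem_filter.mp hjT).2)
      have key : ∀ i ∈ T, min (a i / r) (r / a i) ≤ δ⁻¹ ^ (i - j).toNat := by
        intro i hi
        have hij : j ≤ i := Finset.min'_le T i hi
        set k := (i - j).toNat with hk
        have hik : j + (k : ℤ) = i := by omega
        have hiter := lacunary_iter hδ ha hl k j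
        rw [hik] at hiter
        have hpk : (0:ℝ) < δ ^ k := by positivity
        have h1 : r / a i ≤ δ⁻¹ ^ k := by
          rw [inv_pow, div_le_iff₀ (ha i), inv_mul_eq_div, le_div_iff₀ hpk]
          nlinarith
        exact le_trans (min_le_right _ _) h1
      calc ∑ i ∈ T, min (a i / r) (r / a i) ≤ ∑ i ∈ T, δ⁻¹ ^ (i - j).toNat :=
            Finset.sum_le_sum key
        _ ≤ (1 - δ⁻¹)⁻¹ := by
            apply sum_geo_le hq0 hq1
            intro x hx y hy hxy
            have hxj : j ≤ x := Finset.min'_le T x hx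
            have hyj : j ≤ y := Finset.min'_le T y hy
            omega
  linarith

lemma schwartzDil_hasFDerivAt {n : ℕ} (φ : SchwartzMap (EuclideanSpace ℝ (Fin n)) ℝ)
    (t : ℝ) (y : EuclideanSpace ℝ (Fin n)) :
    HasFDerivAt (schwartzDil φ t)
      ((t ^ (-(n:ℤ))) • ((fderiv ℝ φ (t⁻¹ • y)).comp
        (t⁻¹ • ContinuousLinearMap.id ℝ (EuclideanSpace ℝ (Fin n))))) y := by
  have hL : HasFDerivAt (fun x : EuclideanSpace ℝ (Fin n) => t⁻¹ • x)
      (t⁻¹ • ContinuousLinearMap.id ℝ (EuclideanSpace ℝ (Fin n))) y :=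
    (hasFDerivAt_id y).const_smul t⁻¹
  have hφ : HasFDerivAt φ (fderiv ℝ φ (t⁻¹ • y)) (t⁻¹ • y) :=
    φ.differentiableAt.hasFDerivAt
  have hcomp := hφ.comp y hL
  exact hcomp.const_mul _

lemma schwartzDil_fderiv_norm_le {n : ℕ} (φ : SchwartzMap (EuclideanSpace ℝ (Fin n)) ℝ)
    {t : ℝ} (ht : 0 < t) (y : EuclideanSpace ℝ (Fin n)) :
    ‖(t ^ (-(n:ℤ))) • ((fderiv ℝ φ (t⁻¹ • y)).comp
        (t⁻¹ • ContinuousLinearMap.id ℝ (EuclideanSpace ℝ (Fin n))))‖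
      ≤ (t ^ n * t)⁻¹ * ‖fderiv ℝ φ (t⁻¹ • y)‖ := by
  have h1 : ‖(t ^ (-(n:ℤ)) : ℝ)‖ = (t ^ n)⁻¹ := by
    rw [Real.norm_eq_abs, abs_of_pos (by positivity), zpow_neg, zpow_natCast]
  rw [norm_smul (t ^ (-(n:ℤ))) ((fderiv ℝ φ (t⁻¹ • y)).comp
        (t⁻¹ • ContinuousLinearMap.id ℝ (EuclideanSpace ℝ (Fin n)))), h1]
  have h2 : ‖(t⁻¹ • ContinuousLinearMap.id ℝ (EuclideanSpace ℝ (Fin n)))‖ ≤ t⁻¹ := by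
    rw [norm_smul t⁻¹ (ContinuousLinearMap.id ℝ (EuclideanSpace ℝ (Fin n))), Real.norm_eq_abs, abs_of_pos (by positivity)]
    calc t⁻¹ * ‖ContinuousLinearMap.id ℝ (EuclideanSpace ℝ (Fin n))‖
        ≤ t⁻¹ * 1 := by gcongr; exact ContinuousLinearMap.norm_id_le
      _ = t⁻¹ := mul_one _
  calc (t ^ n)⁻¹ * ‖(fderiv ℝ φ (t⁻¹ • y)).comp
          (t⁻¹ • ContinuousLinearMap.id ℝ (EuclideanSpace ℝ (Fin n)))‖
      ≤ (t ^ n)⁻¹ * (‖fderiv ℝ φ (t⁻¹ • y)‖ * t⁻¹) := by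
        have h3 := ContinuousLinearMap.opNorm_comp_le (fderiv ℝ (⇑φ) (t⁻¹ • y))
          (t⁻¹ • ContinuousLinearMap.id ℝ (EuclideanSpace ℝ (Fin n)))
        have h4 : ‖fderiv ℝ (⇑φ) (t⁻¹ • y)‖ *
            ‖t⁻¹ • ContinuousLinearMap.id ℝ (EuclideanSpace ℝ (Fin n))‖
            ≤ ‖fderiv ℝ (⇑φ) (t⁻¹ • y)‖ * t⁻¹ := by gcongr
        have h5 : (0:ℝ) ≤ (t ^ n)⁻¹ := by positivity
        nlinarith [norm_nonneg (fderiv ℝ (⇑φ) (t⁻¹ • y))]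
    _ = (t ^ n * t)⁻¹ * ‖fderiv ℝ φ (t⁻¹ • y)‖ := by
        rw [mul_inv]; ring

lemma schwartzDil_bound {n : ℕ} (φ : SchwartzMap (EuclideanSpace ℝ (Fin n)) ℝ) :
    ∃ M : ℝ, 0 < M ∧ ∀ (t : ℝ), 0 < t → ∀ y : EuclideanSpace ℝ (Fin n), y ≠ 0 →
      ‖fderiv ℝ (schwartzDil φ t) y‖ ≤ M / ‖y‖ ^ (n + 1) * min (t / ‖y‖) (‖y‖ / t) := by
  obtain ⟨C₀, hC₀pos, hC₀⟩ := φ.decay 0 1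
  obtain ⟨C₁, hC₁pos, hC₁⟩ := φ.decay (n + 2) 1
  have hfd : ∀ x : EuclideanSpace ℝ (Fin n),
      ‖iteratedFDeriv ℝ 1 (⇑φ) x‖ = ‖fderiv ℝ (⇑φ) x‖ := by
    intro x
    rw [← norm_iteratedFDeriv_fderiv (n := 0), norm_iteratedFDeriv_zero]
  refine ⟨max C₀ C₁, lt_max_of_lt_left hC₀pos, ?_⟩
  intro t ht y hy
  set r := ‖y‖ with hrdef
  have hr : 0 < r := norm_pos_iff.mpr hy
  have ht' : t ≠ 0 := ne_of_gt ht
  have hr' : r ≠ 0 := ne_of_gt hr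
  have hDnorm : ‖fderiv ℝ (schwartzDil φ t) y‖
      ≤ (t ^ n * t)⁻¹ * ‖fderiv ℝ (⇑φ) (t⁻¹ • y)‖ := by
    rw [(schwartzDil_hasFDerivAt φ t y).fderiv]
    exact schwartzDil_fderiv_norm_le φ ht y
  set D := ‖fderiv ℝ (⇑φ) (t⁻¹ • y)‖ with hD
  have hD0 : 0 ≤ D := norm_nonneg _
  have hnormsc : ‖t⁻¹ • y‖ = r / t := by
    rw [norm_smul, Real.norm_eq_abs, abs_of_pos (by positivity), inv_mul_eq_div, ← hrdef]
  have hb0 : D ≤ C₀ := by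
    have := hC₀ (t⁻¹ • y)
    rw [pow_zero, one_mul, hfd] at this
    exact this
  have hb1 : (r / t) ^ (n + 2) * D ≤ C₁ := by
    have := hC₁ (t⁻¹ • y)
    rw [hfd, hnormsc] at this
    exact this
  have hM0 : (0:ℝ) ≤ max C₀ C₁ := le_trans hC₀pos.le (le_max_left _ _)
  rcases le_total t r with hcase | hcase
  · have hmin : min (t / r) (r / t) = t / r :=
      min_eq_left (by rw [div_le_div_iff₀ hr ht]; nlinarith)
    rw [hmin]
    have hp : (0:ℝ) < (r / t) ^ (n + 2) := by positivity
    have hDb : D ≤ max C₀ C₁ * (t / r) ^ (n + 2) := by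
      have h1 : D ≤ C₁ / (r / t) ^ (n + 2) := by
        rw [le_div_iff₀ hp]; nlinarith
      calc D ≤ C₁ / (r / t) ^ (n + 2) := h1
        _ = C₁ * (t / r) ^ (n + 2) := by
            rw [div_pow, div_pow]; field_simp
        _ ≤ max C₀ C₁ * (t / r) ^ (n + 2) := by
            gcongr; exact le_max_right _ _
    calc ‖fderiv ℝ (schwartzDil φ t) y‖ ≤ (t ^ n * t)⁻¹ * D := hDnorm
      _ ≤ (t ^ n * t)⁻¹ * (max C₀ C₁ * (t / r) ^ (n + 2)) := by
          gcongr
      _ = max C₀ C₁ / r ^ (n + 1) * (t / r) := by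
          rw [div_pow]
          field_simp
          ring
  · have hmin : min (t / r) (r / t) = r / t :=
      min_eq_right (by rw [div_le_div_iff₀ ht hr]; nlinarith)
    rw [hmin]
    have hpow : r ^ n ≤ t ^ n := pow_le_pow_left₀ hr.le hcase n
    have e : max C₀ C₁ / r ^ (n + 1) * (r / t) = max C₀ C₁ / (r ^ n * t) := by
      rw [pow_succ]; field_simp
    rw [e]
    calc ‖fderiv ℝ (schwartzDil φ t) y‖ ≤ (t ^ n * t)⁻¹ * D := hDnorm
      _ ≤ (t ^ n * t)⁻¹ * max C₀ C₁ := by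
          have : D ≤ max C₀ C₁ := le_trans hb0 (le_max_left _ _)
          gcongr
      _ = max C₀ C₁ / (t ^ n * t) := by rw [inv_mul_eq_div]
      _ ≤ max C₀ C₁ / (r ^ n * t) := by
          gcongr

theorem stmt7 (n : ℕ) (φ : SchwartzMap (EuclideanSpace ℝ (Fin n)) ℝ)
    (δ V : ℝ) (hδ : 1 < δ) (hV : 0 ≤ V) :
    ∃ C > 0, ∀ (a : ℤ → ℝ) (v : ℤ → ℂ),
      (∀ i, 0 < a i) → (∀ i, δ ≤ a (i + 1) / a i) → (∀ i, ‖v i‖ ≤ V) →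
      ∀ N₁ N₂ : ℤ, N₁ < N₂ → ∀ y : EuclideanSpace ℝ (Fin n), y ≠ 0 →
        ‖fderiv ℝ (fun w : EuclideanSpace ℝ (Fin n) =>
            ∑ i ∈ Finset.Icc N₁ N₂,
              v i * ((schwartzDil φ (a (i + 1)) w - schwartzDil φ (a i) w : ℝ) : ℂ)) y‖
          ≤ C / ‖y‖ ^ (n + 1) := by
  obtain ⟨M, hM, hbound⟩ := schwartzDil_bound φ
  have hδ0 : (0:ℝ) < δ := lt_trans one_pos hδ
  have hq1 : δ⁻¹ < 1 := inv_lt_one_of_one_lt₀ hδ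
  have hI : (0:ℝ) < (1 - δ⁻¹)⁻¹ := by
    have : (0:ℝ) < 1 - δ⁻¹ := by linarith
    positivity
  have h4 : (0:ℝ) ≤ 4 * (1 - δ⁻¹)⁻¹ := (mul_pos four_pos hI).le
  have hC0 : 0 ≤ V * M * (4 * (1 - δ⁻¹)⁻¹) := mul_nonneg (mul_nonneg hV hM.le) h4
  refine ⟨V * M * (4 * (1 - δ⁻¹)⁻¹) + 1, by linarith, ?_⟩
  intro a v ha hl hv N₁ N₂ _ y hy
  set r := ‖y‖ with hrdef
  have hr : 0 < r := norm_pos_iff.mpr hy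
  set S := Finset.Icc N₁ N₂ with hS
  have hterm : ∀ i : ℤ, HasFDerivAt
      (fun w : EuclideanSpace ℝ (Fin n) =>
        v i * ((schwartzDil φ (a (i + 1)) w - schwartzDil φ (a i) w : ℝ) : ℂ))
      (v i • (Complex.ofRealCLM.comp
        (fderiv ℝ (schwartzDil φ (a (i + 1))) y - fderiv ℝ (schwartzDil φ (a i)) y))) y := by
    intro i
    have h1 : HasFDerivAt (schwartzDil φ (a (i + 1)))
        (fderiv ℝ (schwartzDil φ (a (i + 1))) y) y :=
      (schwartzDil_hasFDerivAt φ (a (i + 1)) y).differentiableAt.hasFDerivAt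
    have h0 : HasFDerivAt (schwartzDil φ (a i)) (fderiv ℝ (schwartzDil φ (a i)) y) y :=
      (schwartzDil_hasFDerivAt φ (a i) y).differentiableAt.hasFDerivAt
    have hsub := h1.sub h0
    have hofr := (Complex.ofRealCLM.hasFDerivAt).comp y hsub
    exact hofr.const_mul (v i)
  have hsum : HasFDerivAt
      (fun w : EuclideanSpace ℝ (Fin n) =>
        ∑ i ∈ S, v i * ((schwartzDil φ (a (i + 1)) w - schwartzDil φ (a i) w : ℝ) : ℂ))
      (∑ i ∈ S, v i • (Complex.ofRealCLM.comp
        (fderiv ℝ (schwartzDil φ (a (i + 1))) y - fderiv ℝ (schwartzDil φ (a i)) y))) y :=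
    HasFDerivAt.fun_sum (fun i _ => hterm i)
  rw [hsum.fderiv]
  have hB : (0:ℝ) ≤ M / r ^ (n + 1) := by positivity
  have hF : ∀ i ∈ S, ‖v i • (Complex.ofRealCLM.comp
        (fderiv ℝ (schwartzDil φ (a (i + 1))) y - fderiv ℝ (schwartzDil φ (a i)) y))‖
      ≤ V * (M / r ^ (n + 1) * min (a (i + 1) / r) (r / a (i + 1))
          + M / r ^ (n + 1) * min (a i / r) (r / a i)) := by
    intro i _
    set T := fderiv ℝ (schwartzDil φ (a (i + 1))) y - fderiv ℝ (schwartzDil φ (a i)) y with hT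
    have hsm : ‖v i • (Complex.ofRealCLM.comp T)‖ ≤ ‖v i‖ * ‖Complex.ofRealCLM.comp T‖ := by
      apply ContinuousLinearMap.opNorm_le_bound _ (by positivity)
      intro x
      rw [ContinuousLinearMap.smul_apply, norm_smul, mul_assoc]
      gcongr
      exact ContinuousLinearMap.le_opNorm _ x
    calc ‖v i • (Complex.ofRealCLM.comp T)‖
        ≤ ‖v i‖ * ‖Complex.ofRealCLM.comp T‖ := hsm
      _ ≤ V * ‖T‖ := by
          have hc : ‖Complex.ofRealCLM.comp T‖ ≤ ‖T‖ := by
            calc ‖Complex.ofRealCLM.comp T‖ ≤ ‖Complex.ofRealCLM‖ * ‖T‖ :=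
                  ContinuousLinearMap.opNorm_comp_le _ _
              _ = ‖T‖ := by rw [Complex.ofRealCLM_norm, one_mul]
          exact mul_le_mul (hv i) hc (norm_nonneg _) hV
      _ ≤ V * (M / r ^ (n + 1) * min (a (i + 1) / r) (r / a (i + 1))
          + M / r ^ (n + 1) * min (a i / r) (r / a i)) := by
          have h1 := hbound (a (i + 1)) (ha (i + 1)) y hy
          have h0 := hbound (a i) (ha i) y hy
          have hTle : ‖T‖ ≤ M / r ^ (n + 1) * min (a (i + 1) / r) (r / a (i + 1))
              + M / r ^ (n + 1) * min (a i / r) (r / a i) := by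
            rw [hT]
            exact le_trans (norm_sub_le _ _) (add_le_add h1 h0)
          exact mul_le_mul_of_nonneg_left hTle hV
  have hs1 : ∑ i ∈ S, min (a (i + 1) / r) (r / a (i + 1)) ≤ 2 * (1 - δ⁻¹)⁻¹ :=
    lacunary_min_sum hδ (a := fun i => a (i + 1)) (fun i => ha (i + 1))
      (fun i => hl (i + 1)) hr S
  have hs2 : ∑ i ∈ S, min (a i / r) (r / a i) ≤ 2 * (1 - δ⁻¹)⁻¹ :=
    lacunary_min_sum hδ ha hl hr S
  calc ‖∑ i ∈ S, v i • (Complex.ofRealCLM.comp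
        (fderiv ℝ (schwartzDil φ (a (i + 1))) y - fderiv ℝ (schwartzDil φ (a i)) y))‖
      ≤ ∑ i ∈ S, ‖v i • (Complex.ofRealCLM.comp
        (fderiv ℝ (schwartzDil φ (a (i + 1))) y - fderiv ℝ (schwartzDil φ (a i)) y))‖ :=
        norm_sum_le _ _
    _ ≤ ∑ i ∈ S, V * (M / r ^ (n + 1) * min (a (i + 1) / r) (r / a (i + 1))
          + M / r ^ (n + 1) * min (a i / r) (r / a i)) := Finset.sum_le_sum hF
    _ = V * (M / r ^ (n + 1) * ∑ i ∈ S, min (a (i + 1) / r) (r / a (i + 1))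
          + M / r ^ (n + 1) * ∑ i ∈ S, min (a i / r) (r / a i)) := by
        rw [← Finset.mul_sum, Finset.sum_add_distrib, ← Finset.mul_sum, ← Finset.mul_sum]
    _ ≤ V * (M / r ^ (n + 1) * (2 * (1 - δ⁻¹)⁻¹)
          + M / r ^ (n + 1) * (2 * (1 - δ⁻¹)⁻¹)) := by
        exact mul_le_mul_of_nonneg_left
          (add_le_add (mul_le_mul_of_nonneg_left hs1 hB)
            (mul_le_mul_of_nonneg_left hs2 hB)) hV
    _ = V * M * (4 * (1 - δ⁻¹)⁻¹) / r ^ (n + 1) := by ring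
    _ ≤ (V * M * (4 * (1 - δ⁻¹)⁻¹) + 1) / r ^ (n + 1) := by
        gcongr
        linarith
end

section
/- Let g := 𝓕φ be the Fourier transform of a Schwartz function φ on ℝⁿ. Then there exists a constant C such that for all ξ ∈ ℝⁿ, ∫₀^∞ |∇g(tξ) · ξ| dt ≤ C. -/
open MeasureTheory Metric Real Set

theorem stmt9 (n : ℕ) (φ : SchwartzMap (EuclideanSpace ℝ (Fin n)) ℂ) :
    ∃ C : ℝ, ∀ ξ : EuclideanSpace ℝ (Fin n),
      ∫ t in Set.Ioi (0 : ℝ),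
        ‖fderiv ℝ (fun x => SchwartzMap.fourierTransformCLM ℂ φ x) (t • ξ) ξ‖ ≤ C := by
  set ψ := SchwartzMap.fourierTransformCLM ℂ φ with hψ
  obtain ⟨C0, hC0pos, hC0⟩ := ψ.decay 0 1
  obtain ⟨C2, hC2pos, hC2⟩ := ψ.decay 2 1
  set C := C0 + C2 with hCdef
  have hCpos : 0 < C := by positivity
  -- key decay estimate for fderiv of ψ
  have hfd : ∀ x : EuclideanSpace ℝ (Fin n),
      ‖fderiv ℝ (fun y => ψ y) x‖ = ‖iteratedFDeriv ℝ 1 (fun y => ψ y) x‖ := by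
    intro x
    rw [← norm_iteratedFDeriv_fderiv, norm_iteratedFDeriv_zero]
  have key : ∀ x : EuclideanSpace ℝ (Fin n),
      ‖fderiv ℝ (fun y => ψ y) x‖ ≤ C / (1 + ‖x‖ ^ 2) := by
    intro x
    have h0 := hC0 x
    have h2 := hC2 x
    have hpos : (0 : ℝ) < 1 + ‖x‖ ^ 2 := by positivity
    rw [hfd x, le_div_iff₀ hpos]
    have hnn : (0 : ℝ) ≤ ‖iteratedFDeriv ℝ 1 (fun y => ψ y) x‖ := norm_nonneg _
    simp only [pow_zero, one_mul] at h0
    nlinarith [h0, h2]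
  have hcont_fd : Continuous (fderiv ℝ (fun y => ψ y)) :=
    (ψ.smooth ⊤).continuous_fderiv (by norm_num)
  refine ⟨C * (π / 2), fun ξ => ?_⟩
  by_cases hξ : ξ = 0
  · have : ∀ t : ℝ, ‖fderiv ℝ (fun x => ψ x) (t • ξ) ξ‖ = 0 := by
      intro t
      simp [hξ]
    simp only [this]
    rw [integral_zero]
    positivity
  · have hr : 0 < ‖ξ‖ := norm_pos_iff.mpr hξ
    set r := ‖ξ‖ with hrdef
    -- the dominating function and its antiderivative
    set g : ℝ → ℝ := fun t => C * arctan (r * t) with hg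
    set g' : ℝ → ℝ := fun t => C * r / (1 + (r * t) ^ 2) with hg'
    have hderiv : ∀ t : ℝ, HasDerivAt g (g' t) t := by
      intro t
      have h1 : HasDerivAt (fun t : ℝ => r * t) r t := by
        simpa using (hasDerivAt_id t).const_mul r
      have h2 := (Real.hasDerivAt_arctan (r * t)).comp t h1
      have h3 := h2.const_mul C
      refine h3.congr_deriv ?_
      show _ = C * r / (1 + (r * t) ^ 2)
      ring
    have hg'nonneg : ∀ t ∈ Ioi (0 : ℝ), 0 ≤ g' t := by
      intro t _
      have : (0 : ℝ) < 1 + (r * t) ^ 2 := by positivity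
      positivity
    have htend : Filter.Tendsto g Filter.atTop (nhds (C * (π / 2))) := by
      have h1 : Filter.Tendsto (fun t : ℝ => r * t) Filter.atTop Filter.atTop :=
        Filter.Tendsto.const_mul_atTop hr Filter.tendsto_id
      have h2 : Filter.Tendsto (fun t : ℝ => arctan (r * t)) Filter.atTop (nhds (π / 2)) :=
        (Real.tendsto_arctan_atTop.mono_right nhdsWithin_le_nhds).comp h1
      simpa [hg] using h2.const_mul C
    have hint : IntegrableOn g' (Ioi (0 : ℝ)) :=
      integrableOn_Ioi_deriv_of_nonneg' (fun t _ => hderiv t) hg'nonneg htend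
    have hval : ∫ t in Ioi (0 : ℝ), g' t = C * (π / 2) := by
      rw [integral_Ioi_of_hasDerivAt_of_nonneg' (fun t _ => hderiv t) hg'nonneg htend]
      simp [hg]
    -- pointwise bound
    have hbound : ∀ t ∈ Ioi (0 : ℝ),
        ‖fderiv ℝ (fun x => ψ x) (t • ξ) ξ‖ ≤ g' t := by
      intro t ht
      have ht0 : 0 < t := ht
      have h1 : ‖fderiv ℝ (fun x => ψ x) (t • ξ) ξ‖ ≤
          ‖fderiv ℝ (fun x => ψ x) (t • ξ)‖ * r :=
        (fderiv ℝ (fun x => ψ x) (t • ξ)).le_opNorm ξ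
      have hnorm : ‖t • ξ‖ = r * t := by
        rw [norm_smul, Real.norm_eq_abs, abs_of_pos ht0]
        ring
      have h2 := key (t • ξ)
      rw [hnorm] at h2
      have hpos : (0 : ℝ) < 1 + (r * t) ^ 2 := by positivity
      calc ‖fderiv ℝ (fun x => ψ x) (t • ξ) ξ‖
          ≤ ‖fderiv ℝ (fun x => ψ x) (t • ξ)‖ * r := h1
        _ ≤ (C / (1 + (r * t) ^ 2)) * r := by
            apply mul_le_mul_of_nonneg_right h2 hr.le
        _ = g' t := by simp [hg']; ring
    -- measurability / integrability of the LHS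
    have hmeas : Continuous fun t : ℝ => ‖fderiv ℝ (fun x => ψ x) (t • ξ) ξ‖ := by
      apply Continuous.norm
      exact (hcont_fd.comp (continuous_id.smul continuous_const)).clm_apply
        continuous_const
    have hlhs_int : IntegrableOn (fun t : ℝ =>
        ‖fderiv ℝ (fun x => ψ x) (t • ξ) ξ‖) (Ioi (0 : ℝ)) := by
      apply hint.mono' (hmeas.aestronglyMeasurable.restrict)
      filter_upwards [ae_restrict_mem measurableSet_Ioi] with t ht
      rw [Real.norm_eq_abs, abs_of_nonneg (norm_nonneg _)]
      exact hbound t ht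
    calc ∫ t in Ioi (0 : ℝ), ‖fderiv ℝ (fun x => ψ x) (t • ξ) ξ‖
        ≤ ∫ t in Ioi (0 : ℝ), g' t :=
          setIntegral_mono_on hlhs_int hint measurableSet_Ioi hbound
      _ = C * (π / 2) := hval
end

section
/- Let φ be a Schwartz function on ℝⁿ, {a_i}_{i∈ℤ} a sequence with 1 < δ ≤ a_{i+1}/a_i ≤ δ² for all i, and {v_i} a bounded complex sequence. Then there exists C > 0 depending on n, φ, δ, ‖v‖_{ℓ∞} such that for all integers m ≤ M and all x, y ∈ ℝⁿ, |∑_{i=m}^{M} v_i (φ_{a_{i+1}}(x−y) − φ_{a_i}(x−y))| ≤ C / a_m^n. -/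
open MeasureTheory Metric Finset

theorem stmt10 (n : ℕ) (φ : SchwartzMap (EuclideanSpace ℝ (Fin n)) ℝ)
    (δ V : ℝ) (hδ : 1 < δ) (hV : 0 ≤ V) :
    ∃ C > 0, ∀ (a : ℤ → ℝ) (v : ℤ → ℂ),
      (∀ i, 0 < a i) → (∀ i, δ ≤ a (i + 1) / a i ∧ a (i + 1) / a i ≤ δ ^ 2) →
      (∀ i, ‖v i‖ ≤ V) →
      ∀ m M : ℤ, m ≤ M → ∀ x y : EuclideanSpace ℝ (Fin n),
        ‖∑ i ∈ Finset.Icc m M,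
            v i * ((schwartzDil φ (a (i + 1)) (x - y) - schwartzDil φ (a i) (x - y) : ℝ) : ℂ)‖
          ≤ C / a m ^ n := by
  obtain ⟨B, hB0, hB⟩ := φ.decay 0 0
  have hB' : ∀ z : EuclideanSpace ℝ (Fin n), ‖φ z‖ ≤ B := by
    intro z
    simpa [norm_iteratedFDeriv_zero] using hB z
  rcases Nat.eq_zero_or_pos n with hn | hn
  · subst hn
    refine ⟨1, one_pos, fun a v ha hr hv m M hmM x y => ?_⟩
    have hd : ∀ i : ℤ,
        schwartzDil φ (a (i + 1)) (x - y) - schwartzDil φ (a i) (x - y) = 0 := by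
      intro i
      have h : (a (i + 1))⁻¹ • (x - y) = (a i)⁻¹ • (x - y) := Subsingleton.elim _ _
      simp [schwartzDil, h]
    simp [hd]
  · have hδ0 : (0 : ℝ) < δ := lt_trans one_pos hδ
    set r : ℝ := δ⁻¹ ^ n with hrdef
    have hr0 : 0 ≤ r := pow_nonneg (inv_nonneg.2 hδ0.le) n
    have hinv1 : δ⁻¹ < 1 := inv_lt_one_of_one_lt₀ hδ
    have hr1 : r < 1 := by
      calc r ≤ δ⁻¹ ^ 1 := pow_le_pow_of_le_one (inv_nonneg.2 hδ0.le) hinv1.le hn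
      _ = δ⁻¹ := pow_one _
      _ < 1 := hinv1
    have h1r : (0 : ℝ) < 1 - r := by linarith
    have hCnn : 0 ≤ 2 * V * B * (1 - r)⁻¹ :=
      mul_nonneg (by positivity) (inv_nonneg.2 h1r.le)
    refine ⟨2 * V * B * (1 - r)⁻¹ + 1, by linarith, ?_⟩
    intro a v ha hr hv m M hmM x y
    have hstep : ∀ i : ℤ, δ * a i ≤ a (i + 1) := by
      intro i
      have h := (hr i).1
      rw [le_div_iff₀ (ha i)] at h
      linarith
    have hmono : ∀ i : ℤ, a i ≤ a (i + 1) := by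
      intro i
      have := hstep i
      nlinarith [ha i]
    have hgrow : ∀ i : ℤ, m ≤ i → a m * δ ^ (i - m).toNat ≤ a i := by
      intro i hi
      refine Int.leInduction (motive := fun j _ => a m * δ ^ (j - m).toNat ≤ a j) ?_ ?_ i hi
      · simp
      · intro i hi ih
        have hk : (i + 1 - m).toNat = (i - m).toNat + 1 := by omega
        rw [hk, pow_succ]
        calc a m * (δ ^ (i - m).toNat * δ) = δ * (a m * δ ^ (i - m).toNat) := by ring
        _ ≤ δ * a i := mul_le_mul_of_nonneg_left ih hδ0.le
        _ ≤ a (i + 1) := hstep i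
    have hdil : ∀ (t : ℝ), 0 < t → ∀ z, ‖schwartzDil φ t z‖ ≤ B / t ^ n := by
      intro t ht z
      rw [schwartzDil, norm_mul]
      have h1 : ‖t ^ (-(n : ℤ))‖ = (t ^ n)⁻¹ := by
        rw [Real.norm_eq_abs, abs_of_pos (zpow_pos ht _), zpow_neg, zpow_natCast]
      rw [h1, div_eq_inv_mul]
      exact mul_le_mul_of_nonneg_left (hB' _) (inv_nonneg.2 (pow_nonneg ht.le n))
    have hterm : ∀ i ∈ Finset.Icc m M,
        ‖v i * ((schwartzDil φ (a (i + 1)) (x - y) - schwartzDil φ (a i) (x - y) : ℝ) : ℂ)‖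
          ≤ 2 * V * B * r ^ (i - m).toNat / a m ^ n := by
      intro i hi
      obtain ⟨him, _⟩ := Finset.mem_Icc.mp hi
      set k := (i - m).toNat with hk
      have h1 : ‖((schwartzDil φ (a (i + 1)) (x - y)
          - schwartzDil φ (a i) (x - y) : ℝ) : ℂ)‖ ≤ 2 * B / a i ^ n := by
        rw [Complex.norm_real]
        calc ‖schwartzDil φ (a (i + 1)) (x - y) - schwartzDil φ (a i) (x - y)‖
            ≤ ‖schwartzDil φ (a (i + 1)) (x - y)‖ + ‖schwartzDil φ (a i) (x - y)‖ :=
              norm_sub_le _ _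
        _ ≤ B / a (i + 1) ^ n + B / a i ^ n :=
              add_le_add (hdil _ (ha _) _) (hdil _ (ha i) _)
        _ ≤ B / a i ^ n + B / a i ^ n :=
              add_le_add (div_le_div_of_nonneg_left hB0.le (pow_pos (ha i) n)
                (pow_le_pow_left₀ (ha i).le (hmono i) n)) le_rfl
        _ = 2 * B / a i ^ n := by ring
      have hai : a m * δ ^ k ≤ a i := hgrow i him
      have hone : r ^ k * (δ ^ k) ^ n = 1 := by
        have : r ^ k * (δ ^ k) ^ n = (δ⁻¹ * δ) ^ (n * k) := by
          rw [hrdef, mul_pow, ← pow_mul, ← pow_mul, Nat.mul_comm k n]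
        rw [this, inv_mul_cancel₀ hδ0.ne', one_pow]
      have key : 2 * B / a i ^ n ≤ 2 * B * r ^ k / a m ^ n := by
        rw [div_le_div_iff₀ (pow_pos (ha i) n) (pow_pos (ha m) n)]
        have h2 : (a m * δ ^ k) ^ n ≤ a i ^ n :=
          pow_le_pow_left₀ (mul_pos (ha m) (pow_pos hδ0 k)).le hai n
        calc 2 * B * a m ^ n = 2 * B * (r ^ k * (δ ^ k) ^ n) * a m ^ n := by
              rw [hone]; ring
        _ = (2 * B * r ^ k) * ((a m) ^ n * (δ ^ k) ^ n) := by ring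
        _ = (2 * B * r ^ k) * (a m * δ ^ k) ^ n := by rw [mul_pow]
        _ ≤ (2 * B * r ^ k) * a i ^ n :=
              mul_le_mul_of_nonneg_left h2 (by positivity)
      calc ‖v i * ((schwartzDil φ (a (i + 1)) (x - y)
            - schwartzDil φ (a i) (x - y) : ℝ) : ℂ)‖
          = ‖v i‖ * ‖((schwartzDil φ (a (i + 1)) (x - y)
            - schwartzDil φ (a i) (x - y) : ℝ) : ℂ)‖ := norm_mul _ _
      _ ≤ V * (2 * B * r ^ k / a m ^ n) := by
            apply mul_le_mul (hv i) (le_trans h1 key) (norm_nonneg _) hV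
      _ = 2 * V * B * r ^ k / a m ^ n := by ring
    have hsum : ∑ i ∈ Finset.Icc m M, r ^ (i - m).toNat ≤ (1 - r)⁻¹ := by
      have hre : ∑ i ∈ Finset.Icc m M, r ^ (i - m).toNat
          = ∑ j ∈ Finset.range ((M - m).toNat + 1), r ^ j := by
        apply Finset.sum_nbij' (fun i => (i - m).toNat) (fun j => m + (j : ℤ))
        · intro i hi
          simp only [Finset.mem_Icc] at hi
          simp only [Finset.mem_range]
          omega
        · intro j hj
          simp only [Finset.mem_range] at hj
          simp only [Finset.mem_Icc]
          omega
        · intro i hi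
          simp only [Finset.mem_Icc] at hi
          omega
        · intro j hj
          simp only [Finset.mem_range] at hj
          omega
        · intro i _
          rfl
      rw [hre]
      calc ∑ j ∈ Finset.range ((M - m).toNat + 1), r ^ j
          ≤ ∑' j : ℕ, r ^ j := Summable.sum_le_tsum _ (fun j _ => pow_nonneg hr0 j)
            (summable_geometric_of_lt_one hr0 hr1)
      _ = (1 - r)⁻¹ := tsum_geometric_of_lt_one hr0 hr1
    calc ‖∑ i ∈ Finset.Icc m M,
          v i * ((schwartzDil φ (a (i + 1)) (x - y) - schwartzDil φ (a i) (x - y) : ℝ) : ℂ)‖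
        ≤ ∑ i ∈ Finset.Icc m M,
          ‖v i * ((schwartzDil φ (a (i + 1)) (x - y)
            - schwartzDil φ (a i) (x - y) : ℝ) : ℂ)‖ := norm_sum_le _ _
    _ ≤ ∑ i ∈ Finset.Icc m M, 2 * V * B * r ^ (i - m).toNat / a m ^ n :=
          Finset.sum_le_sum hterm
    _ = (2 * V * B / a m ^ n) * ∑ i ∈ Finset.Icc m M, r ^ (i - m).toNat := by
          rw [Finset.mul_sum]
          exact Finset.sum_congr rfl fun i _ => by ring
    _ ≤ (2 * V * B / a m ^ n) * (1 - r)⁻¹ :=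
          mul_le_mul_of_nonneg_left hsum (div_nonneg (by positivity) (pow_pos (ha m) n).le)
    _ = 2 * V * B * (1 - r)⁻¹ / a m ^ n := by ring
    _ ≤ (2 * V * B * (1 - r)⁻¹ + 1) / a m ^ n := by
          have hd : (0 : ℝ) < a m ^ n := pow_pos (ha m) n
          exact (div_le_div_iff_of_pos_right hd).mpr (by linarith)
end

section
/- Let φ be a Schwartz function on ℝⁿ, {a_i}_{i∈ℤ} a sequence with 1 < δ ≤ a_{i+1}/a_i ≤ δ² for all i, and {v_i} a bounded complex sequence. Then there exists C > 0 depending on n, φ, δ, ‖v‖_{ℓ∞} such that for all integers −M ≤ m−1, all k ≥ m, and all z, y ∈ ℝⁿ with |z − y| ≥ a_k, |∑_{i=−M}^{m−1} v_i (φ_{a_{i+1}}(z−y) − φ_{a_i}(z−y))| ≤ C δ^{m−k+1} / a_k^n. -/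
open MeasureTheory Metric Finset

theorem stmt11 (n : ℕ) (φ : SchwartzMap (EuclideanSpace ℝ (Fin n)) ℝ)
    (δ V : ℝ) (hδ : 1 < δ) (hV : 0 ≤ V) :
    ∃ C > 0, ∀ (a : ℤ → ℝ) (v : ℤ → ℂ),
      (∀ i, 0 < a i) → (∀ i, δ ≤ a (i + 1) / a i ∧ a (i + 1) / a i ≤ δ ^ 2) →
      (∀ i, ‖v i‖ ≤ V) →
      ∀ M m k : ℤ, -M ≤ m - 1 → m ≤ k → ∀ z y : EuclideanSpace ℝ (Fin n),
        a k ≤ ‖z - y‖ →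
        ‖∑ i ∈ Finset.Icc (-M) (m - 1),
            v i * ((schwartzDil φ (a (i + 1)) (z - y) - schwartzDil φ (a i) (z - y) : ℝ) : ℂ)‖
          ≤ C * δ ^ (m - k + 1) / a k ^ n := by
  have hδ0 : 0 < δ := lt_trans one_pos hδ
  have hδinv : δ⁻¹ < 1 := inv_lt_one_of_one_lt₀ hδ
  have hδinv0 : 0 ≤ δ⁻¹ := by positivity
  have h1δ : 0 < 1 - δ⁻¹ := by linarith
  set Cφ : ℝ := SchwartzMap.seminorm ℝ (n + 1) 0 φ with hCφdef
  have hCφ0 : 0 ≤ Cφ := apply_nonneg _ _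
  refine ⟨2 * (V + 1) * (Cφ + 1) * (1 - δ⁻¹)⁻¹, by positivity, ?_⟩
  intro a v ha hratio hv M m k hM hmk z y hwk
  set w := z - y with hwdef
  have hw0 : 0 < ‖w‖ := lt_of_lt_of_le (ha k) hwk
  -- growth of a
  have hgrow : ∀ i : ℤ, a i * δ ≤ a (i + 1) := by
    intro i
    have := (hratio i).1
    rw [le_div_iff₀ (ha i)] at this
    linarith
  have hmono : ∀ i : ℤ, a i ≤ a (i + 1) := fun i =>
    le_trans (by nlinarith [ha i]) (hgrow i)
  -- comparison: a j ≤ δ ^ (j - l) * a l for j ≤ l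
  have hcomp : ∀ (d : ℕ) (l : ℤ), a (l - d) ≤ δ ^ (-(d : ℤ)) * a l := by
    intro d
    induction d with
    | zero => intro l; simp
    | succ d ih =>
      intro l
      have h1 : a (l - ((d : ℕ) + 1 : ℕ)) = a ((l - 1) - d) := by
        congr 1; push_cast; ring
      have h2 : a ((l - 1) - d) ≤ δ ^ (-(d : ℤ)) * a (l - 1) := ih (l - 1)
      have h3 : a (l - 1) * δ ≤ a l := by
        have := hgrow (l - 1); simpa using this
      have h4 : a (l - 1) ≤ δ⁻¹ * a l := by
        rw [inv_mul_eq_div, le_div_iff₀ hδ0]; exact h3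
      calc a (l - ((d : ℕ) + 1 : ℕ)) = a ((l - 1) - d) := h1
        _ ≤ δ ^ (-(d : ℤ)) * a (l - 1) := h2
        _ ≤ δ ^ (-(d : ℤ)) * (δ⁻¹ * a l) := by
            apply mul_le_mul_of_nonneg_left h4 (by positivity)
        _ = δ ^ (-(((d : ℕ) + 1 : ℕ) : ℤ)) * a l := by
            rw [← zpow_neg_one δ, ← mul_assoc, ← zpow_add₀ (ne_of_gt hδ0)]
            congr 2
            push_cast
            ring
  have hcomp' : ∀ j l : ℤ, j ≤ l → a j ≤ δ ^ (j - l) * a l := by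
    intro j l hjl
    have hd : j = l - ((l - j).toNat : ℤ) := by
      rw [Int.toNat_of_nonneg (by omega)]; ring
    have h := hcomp (l - j).toNat l
    rw [← hd] at h
    have he : (-(((l - j).toNat : ℤ))) = j - l := by omega
    rwa [he] at h
  -- dilation bound
  have dil : ∀ t : ℝ, 0 < t → ‖schwartzDil φ t w‖ ≤ Cφ * t / ‖w‖ ^ (n + 1) := by
    intro t ht
    have hx : ‖t⁻¹ • w‖ = t⁻¹ * ‖w‖ := by
      rw [norm_smul, Real.norm_eq_abs, abs_of_pos (by positivity)]
    have h1 : ‖t⁻¹ • w‖ ^ (n + 1) * ‖φ (t⁻¹ • w)‖ ≤ Cφ :=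
      SchwartzMap.norm_pow_mul_le_seminorm ℝ φ (n + 1) _
    have hxpos : 0 < ‖t⁻¹ • w‖ ^ (n + 1) := by rw [hx]; positivity
    have h2 : ‖φ (t⁻¹ • w)‖ ≤ Cφ / (t⁻¹ * ‖w‖) ^ (n + 1) := by
      rw [← hx, le_div_iff₀ hxpos, mul_comm]; exact h1
    have h3 : ‖schwartzDil φ t w‖ = (t ^ n)⁻¹ * ‖φ (t⁻¹ • w)‖ := by
      rw [schwartzDil, Real.norm_eq_abs, abs_mul, zpow_neg, zpow_natCast,
        abs_of_pos (by positivity), Real.norm_eq_abs]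
    rw [h3]
    calc (t ^ n)⁻¹ * ‖φ (t⁻¹ • w)‖ ≤ (t ^ n)⁻¹ * (Cφ / (t⁻¹ * ‖w‖) ^ (n + 1)) := by
          apply mul_le_mul_of_nonneg_left h2 (by positivity)
      _ = Cφ * t / ‖w‖ ^ (n + 1) := by
          rw [mul_pow, inv_pow]
          field_simp
          ring
  -- geometric sum bound
  have hgeo : ∑ i ∈ Finset.Icc (-M) (m - 1), δ ^ (i + 1 - m) ≤ (1 - δ⁻¹)⁻¹ := by
    have hre : ∑ i ∈ Finset.Icc (-M) (m - 1), δ ^ (i + 1 - m)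
        = ∑ d ∈ Finset.range (m - 1 + M + 1).toNat, (δ⁻¹) ^ d := by
      apply Finset.sum_nbij' (fun i => (m - 1 - i).toNat) (fun d : ℕ => m - 1 - (d : ℤ))
      · intro i hi
        simp only [Finset.mem_Icc] at hi
        simp only [Finset.mem_range]
        omega
      · intro d hd
        simp only [Finset.mem_range] at hd
        simp only [Finset.mem_Icc]
        omega
      · intro i hi
        simp only [Finset.mem_Icc] at hi
        omega
      · intro d hd
        simp only [Finset.mem_range] at hd
        omega
      · intro i hi
        simp only [Finset.mem_Icc] at hi
        rw [← zpow_natCast δ⁻¹, inv_zpow, ← zpow_neg]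
        congr 1
        omega
    rw [hre]
    have hsum := summable_geometric_of_lt_one hδinv0 hδinv
    calc ∑ d ∈ Finset.range (m - 1 + M + 1).toNat, (δ⁻¹) ^ d
        ≤ ∑' d : ℕ, (δ⁻¹) ^ d := Summable.sum_le_tsum _ (fun i _ => by positivity) hsum
      _ = (1 - δ⁻¹)⁻¹ := tsum_geometric_of_lt_one hδinv0 hδinv
  have ham : 0 < a m := ha m
  have hak : 0 < a k := ha k
  -- term bound
  have hterm : ∀ i ∈ Finset.Icc (-M) (m - 1),
      ‖v i * ((schwartzDil φ (a (i + 1)) w - schwartzDil φ (a i) w : ℝ) : ℂ)‖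
        ≤ (2 * V * Cφ * a m / ‖w‖ ^ (n + 1)) * δ ^ (i + 1 - m) := by
    intro i hi
    simp only [Finset.mem_Icc] at hi
    have him : i + 1 ≤ m := by omega
    have hai : a (i + 1) ≤ δ ^ (i + 1 - m) * a m := hcomp' (i + 1) m him
    have haile : a i ≤ δ ^ (i + 1 - m) * a m := le_trans (hmono i) hai
    have hd1 := dil (a (i + 1)) (ha (i + 1))
    have hd2 := dil (a i) (ha i)
    calc ‖v i * ((schwartzDil φ (a (i + 1)) w - schwartzDil φ (a i) w : ℝ) : ℂ)‖
        = ‖v i‖ * ‖schwartzDil φ (a (i + 1)) w - schwartzDil φ (a i) w‖ := by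
          rw [norm_mul, Complex.norm_real]
      _ ≤ V * (Cφ * a (i + 1) / ‖w‖ ^ (n + 1) + Cφ * a i / ‖w‖ ^ (n + 1)) := by
          apply mul_le_mul (hv i) _ (norm_nonneg _) hV
          exact le_trans (norm_sub_le _ _) (add_le_add hd1 hd2)
      _ ≤ V * (Cφ * (δ ^ (i + 1 - m) * a m) / ‖w‖ ^ (n + 1)
            + Cφ * (δ ^ (i + 1 - m) * a m) / ‖w‖ ^ (n + 1)) := by
          gcongr
      _ = (2 * V * Cφ * a m / ‖w‖ ^ (n + 1)) * δ ^ (i + 1 - m) := by ring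
  -- put together
  have hsumle : ‖∑ i ∈ Finset.Icc (-M) (m - 1),
      v i * ((schwartzDil φ (a (i + 1)) w - schwartzDil φ (a i) w : ℝ) : ℂ)‖
        ≤ (2 * V * Cφ * a m / ‖w‖ ^ (n + 1)) * (1 - δ⁻¹)⁻¹ := by
    calc ‖∑ i ∈ Finset.Icc (-M) (m - 1),
        v i * ((schwartzDil φ (a (i + 1)) w - schwartzDil φ (a i) w : ℝ) : ℂ)‖
        ≤ ∑ i ∈ Finset.Icc (-M) (m - 1),
          ‖v i * ((schwartzDil φ (a (i + 1)) w - schwartzDil φ (a i) w : ℝ) : ℂ)‖ :=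
            norm_sum_le _ _
      _ ≤ ∑ i ∈ Finset.Icc (-M) (m - 1),
          (2 * V * Cφ * a m / ‖w‖ ^ (n + 1)) * δ ^ (i + 1 - m) :=
            Finset.sum_le_sum hterm
      _ = (2 * V * Cφ * a m / ‖w‖ ^ (n + 1)) * ∑ i ∈ Finset.Icc (-M) (m - 1), δ ^ (i + 1 - m) := by
            rw [Finset.mul_sum]
      _ ≤ (2 * V * Cφ * a m / ‖w‖ ^ (n + 1)) * (1 - δ⁻¹)⁻¹ := by
            apply mul_le_mul_of_nonneg_left hgeo (by positivity)
  refine le_trans hsumle ?_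
  have hamk : a m ≤ δ ^ (m - k) * a k := hcomp' m k hmk
  calc (2 * V * Cφ * a m / ‖w‖ ^ (n + 1)) * (1 - δ⁻¹)⁻¹
      ≤ (2 * V * Cφ * (δ ^ (m - k) * a k) / a k ^ (n + 1)) * (1 - δ⁻¹)⁻¹ := by
        gcongr
    _ = (2 * V * Cφ * (1 - δ⁻¹)⁻¹) * δ ^ (m - k) / a k ^ n := by
        rw [pow_succ, show (2 * V * Cφ * (δ ^ (m - k) * a k))
          = (2 * V * Cφ * δ ^ (m - k)) * a k by ring, mul_div_mul_right _ _ hak.ne']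
        ring
    _ ≤ (2 * (V + 1) * (Cφ + 1) * (1 - δ⁻¹)⁻¹) * δ ^ (m - k + 1) / a k ^ n := by
        have h1 : 2 * V * Cφ * (1 - δ⁻¹)⁻¹ ≤ 2 * (V + 1) * (Cφ + 1) * (1 - δ⁻¹)⁻¹ := by
          have hvc : 2 * V * Cφ ≤ 2 * (V + 1) * (Cφ + 1) := by nlinarith
          exact mul_le_mul_of_nonneg_right hvc (by positivity)
        have h2 : δ ^ (m - k) ≤ δ ^ (m - k + 1) := zpow_le_zpow_right₀ hδ.le (by omega)
        apply div_le_div₀ (by positivity) _ (by positivity) le_rfl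
        exact mul_le_mul h1 h2 (by positivity) (by positivity)
end

section
/- Let {a_i}_{i∈ℤ} be a δ-lacunary sequence of positive numbers (a_{i+1}/a_i ≥ δ > 1) and {v_i}_{i∈ℤ} a bounded complex sequence. Then there exist a sequence {b_j}_{j∈ℤ} with 1 < δ ≤ b_{j+1}/b_j ≤ δ² for all j and a complex sequence {w_j}_{j∈ℤ} with ‖w‖_{ℓ∞} = ‖v‖_{ℓ∞} such that for every pair of integers N₁ < N₂ there exist integers N₁' < N₂' with ∑_{i=N₁}^{N₂} v_i (φ_{a_{i+1}} * f − φ_{a_i} * f) = ∑_{j=N₁'}^{N₂'} w_j (φ_{b_{j+1}} * f − φ_{b_j} * f) for all f ∈ L^p(ℝⁿ). -/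
open MeasureTheory Metric Finset
open scoped ENNReal

theorem stmt19 (n : ℕ) (φ : SchwartzMap (EuclideanSpace ℝ (Fin n)) ℝ)
    (hφ : ∫ x, φ x = 1) (δ : ℝ) (hδ : 1 < δ)
    (a : ℤ → ℝ) (v : ℤ → ℂ)
    (ha0 : ∀ i, 0 < a i) (ha : ∀ i, δ ≤ a (i + 1) / a i)
    (hv : BddAbove (Set.range fun i => ‖v i‖)) :
    ∃ (b : ℤ → ℝ) (w : ℤ → ℂ),
      (∀ j, 0 < b j) ∧
      (∀ j, δ ≤ b (j + 1) / b j ∧ b (j + 1) / b j ≤ δ ^ 2) ∧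
      (⨆ j, ‖w j‖) = (⨆ i, ‖v i‖) ∧
      ∀ N₁ N₂ : ℤ, N₁ < N₂ → ∃ N₁' N₂' : ℤ, N₁' < N₂' ∧
        ∀ (p : ℝ≥0∞) (f : EuclideanSpace ℝ (Fin n) → ℂ), 1 ≤ p →
          MemLp f p volume → ∀ x : EuclideanSpace ℝ (Fin n),
          ∑ i ∈ Finset.Icc N₁ N₂,
              v i * ((∫ z, (schwartzDil φ (a (i + 1)) z : ℂ) * f (x - z)) -
                     ∫ z, (schwartzDil φ (a i) z : ℂ) * f (x - z))
            = ∑ j ∈ Finset.Icc N₁' N₂',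
                w j * ((∫ z, (schwartzDil φ (b (j + 1)) z : ℂ) * f (x - z)) -
                       ∫ z, (schwartzDil φ (b j) z : ℂ) * f (x - z)) := by
  have hδ0 : (0:ℝ) < δ := lt_trans one_pos hδ
  have hδ1 : δ ≠ 1 := ne_of_gt hδ
  set r : ℤ → ℝ := fun i => a (i + 1) / a i with hrdef
  have hr0 : ∀ i, 0 < r i := fun i => div_pos (ha0 _) (ha0 _)
  have hrδ : ∀ i, δ ≤ r i := ha
  set K : ℤ → ℤ := fun i => ⌊Real.logb δ (r i)⌋ with hKdef
  have hK1 : ∀ i, 1 ≤ K i := by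
    intro i
    rw [hKdef, Int.le_floor]
    push_cast
    have h1 : Real.logb δ δ ≤ Real.logb δ (r i) :=
      (Real.logb_le_logb hδ hδ0 (hr0 i)).mpr (hrδ i)
    rwa [Real.logb_self_eq_one hδ] at h1
  have hK0R : ∀ i, (0:ℝ) < (K i : ℝ) := by
    intro i; exact_mod_cast lt_of_lt_of_le zero_lt_one (hK1 i)
  have hKlow : ∀ i, δ ^ ((K i : ℤ) : ℝ) ≤ r i := by
    intro i
    have h1 : ((K i : ℤ) : ℝ) ≤ Real.logb δ (r i) := by rw [hKdef]; exact Int.floor_le _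
    calc δ ^ ((K i : ℤ) : ℝ) ≤ δ ^ Real.logb δ (r i) :=
          (Real.rpow_le_rpow_left_iff hδ).mpr h1
      _ = r i := Real.rpow_logb hδ0 hδ1 (hr0 i)
  have hKhigh : ∀ i, r i ≤ δ ^ (((K i : ℤ) : ℝ) + 1) := by
    intro i
    have h1 : Real.logb δ (r i) ≤ ((K i : ℤ) : ℝ) + 1 := by
      rw [hKdef]; exact le_of_lt (Int.lt_floor_add_one _)
    calc r i = δ ^ Real.logb δ (r i) := (Real.rpow_logb hδ0 hδ1 (hr0 i)).symm
      _ ≤ δ ^ (((K i : ℤ) : ℝ) + 1) := (Real.rpow_le_rpow_left_iff hδ).mpr h1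
  -- the reindexing function σ
  set σ : ℤ → ℤ := fun m => (Finset.Ico 0 m).sum K - (Finset.Ico m 0).sum K with hσdef
  have hσ0 : σ 0 = 0 := by simp [hσdef]
  have hσstep : ∀ i, σ (i + 1) = σ i + K i := by
    intro i
    rcases le_or_gt 0 i with h | h
    · have h1 : Finset.Ico 0 (i + 1) = insert i (Finset.Ico 0 i) := by
        ext x; simp only [Finset.mem_Ico, Finset.mem_insert]; omega
      have h2 : Finset.Ico (i + 1) 0 = (∅ : Finset ℤ) := by
        ext x; simp only [Finset.mem_Ico, Finset.notMem_empty, iff_false]; omega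
      have h3 : Finset.Ico i 0 = (∅ : Finset ℤ) := by
        ext x; simp only [Finset.mem_Ico, Finset.notMem_empty, iff_false]; omega
      have hnot : i ∉ Finset.Ico 0 i := by rw [Finset.mem_Ico]; omega
      simp only [hσdef, h1, h2, h3, Finset.sum_empty, Finset.sum_insert hnot]
      ring
    · have h1 : Finset.Ico 0 (i + 1) = (∅ : Finset ℤ) := by
        ext x; simp only [Finset.mem_Ico, Finset.notMem_empty, iff_false]; omega
      have h2 : Finset.Ico 0 i = (∅ : Finset ℤ) := by
        ext x; simp only [Finset.mem_Ico, Finset.notMem_empty, iff_false]; omega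
      have h3 : Finset.Ico i 0 = insert i (Finset.Ico (i + 1) 0) := by
        ext x; simp only [Finset.mem_Ico, Finset.mem_insert]; omega
      have hnot : i ∉ Finset.Ico (i + 1) 0 := by rw [Finset.mem_Ico]; omega
      simp only [hσdef, h1, h2, h3, Finset.sum_empty, Finset.sum_insert hnot]
      ring
  have hσadd : ∀ i i' : ℤ, i ≤ i' → σ i + (i' - i) ≤ σ i' := by
    intro i
    refine Int.le_induction ?_ ?_
    · omega
    · intro m _ ih
      have h1 := hσstep m
      have h2 := hK1 m
      omega
  have hσmono : ∀ i i' : ℤ, i ≤ i' → σ i ≤ σ i' := by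
    intro i i' h; have := hσadd i i' h; omega
  have hσlt : ∀ i : ℤ, σ i < σ (i + 1) := by
    intro i; have := hσstep i; have := hK1 i; omega
  -- the inverse reindexing τ
  have hτex : ∀ j : ℤ, ∃ i, (σ i ≤ j ∧ j < σ (i + 1)) ∧ ∀ i', σ i' ≤ j → i' ≤ i := by
    intro j
    have hbdd : ∃ ub, ∀ z : ℤ, σ z ≤ j → z ≤ ub := by
      refine ⟨max j 0, fun z hz => ?_⟩
      by_contra hc
      push_neg at hc
      have h0 : (0:ℤ) ≤ z := le_of_lt (lt_of_le_of_lt (le_max_right _ _) hc)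
      have := hσadd 0 z h0
      omega
    have hinh : ∃ z : ℤ, σ z ≤ j := by
      refine ⟨min j 0, ?_⟩
      have := hσadd (min j 0) 0 (min_le_right _ _)
      omega
    obtain ⟨ub, hub, hmax⟩ := Int.exists_greatest_of_bdd hbdd hinh
    refine ⟨ub, ⟨hub, ?_⟩, hmax⟩
    by_contra hc
    push_neg at hc
    have := hmax _ hc
    omega
  choose τ hτmem hτmax using hτex
  have hτuniq : ∀ (i j : ℤ), σ i ≤ j → j < σ (i + 1) → τ j = i := by
    intro i j h1 h2
    have hle : i ≤ τ j := hτmax j i h1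
    have hge : τ j ≤ i := by
      by_contra hc
      push_neg at hc
      have : σ (i + 1) ≤ σ (τ j) := hσmono _ _ (by omega)
      have := (hτmem j).1
      omega
    omega
  have hτσ : ∀ i : ℤ, τ (σ i) = i := fun i => hτuniq i (σ i) le_rfl (hσlt i)
  -- the sequences b and w
  set b : ℤ → ℝ := fun j => a (τ j) * r (τ j) ^ (((j - σ (τ j) : ℤ) : ℝ) / ((K (τ j) : ℤ) : ℝ))
    with hbdef
  set w : ℤ → ℂ := fun j => v (τ j) with hwdef
  have hb0 : ∀ j, 0 < b j := by
    intro j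
    rw [hbdef]
    exact mul_pos (ha0 _) (Real.rpow_pos_of_pos (hr0 _) _)
  have hblock : ∀ (i j : ℤ), σ i ≤ j → j ≤ σ (i + 1) →
      b j = a i * r i ^ (((j - σ i : ℤ) : ℝ) / ((K i : ℤ) : ℝ)) := by
    intro i j h1 h2
    rcases lt_or_eq_of_le h2 with h2' | h2'
    · rw [hbdef]
      simp only [hτuniq i j h1 h2']
    · -- j = σ (i+1)
      subst h2'
      rw [hbdef]
      simp only [hτσ (i + 1), sub_self, Int.cast_zero, zero_div, Real.rpow_zero, mul_one]
      have hexp : (((σ (i + 1) - σ i : ℤ) : ℝ) / ((K i : ℤ) : ℝ)) = 1 := by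
        have h4 : σ (i + 1) - σ i = K i := by have := hσstep i; omega
        rw [h4]
        exact div_self (ne_of_gt (hK0R i))
      have hmul : a i * r i = a (i + 1) := by
        have hai : a i ≠ 0 := ne_of_gt (ha0 i)
        simp only [hrdef]
        field_simp
      rw [hexp, Real.rpow_one, hmul]
  have hbσ : ∀ i : ℤ, b (σ i) = a i := by
    intro i
    rw [hblock i (σ i) le_rfl (le_of_lt (hσlt i))]
    simp
  have hratio : ∀ j : ℤ, b (j + 1) / b j = r (τ j) ^ (1 / ((K (τ j) : ℤ) : ℝ)) := by
    intro j
    obtain ⟨h1, h2⟩ := hτmem j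
    have e1 : b j = a (τ j) * r (τ j) ^ (((j - σ (τ j) : ℤ) : ℝ) / ((K (τ j) : ℤ) : ℝ)) :=
      hblock (τ j) j h1 (le_of_lt h2)
    have e2 : b (j + 1) = a (τ j) *
        r (τ j) ^ (((j + 1 - σ (τ j) : ℤ) : ℝ) / ((K (τ j) : ℤ) : ℝ)) :=
      hblock (τ j) (j + 1) (by omega) (by omega)
    rw [e1, e2, mul_div_mul_left _ _ (ne_of_gt (ha0 (τ j))), ← Real.rpow_sub (hr0 (τ j))]
    congr 1
    rw [div_sub_div_same]
    congr 1
    push_cast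
    ring
  have hbound : ∀ j : ℤ, δ ≤ b (j + 1) / b j ∧ b (j + 1) / b j ≤ δ ^ 2 := by
    intro j
    set i := τ j with hidef
    have hk0 : ((K i : ℤ) : ℝ) ≠ 0 := ne_of_gt (hK0R i)
    have hinv0 : (0:ℝ) ≤ 1 / ((K i : ℤ) : ℝ) := div_nonneg zero_le_one (le_of_lt (hK0R i))
    rw [hratio j, ← hidef]
    constructor
    · have h1 : (δ ^ ((K i : ℤ) : ℝ)) ^ (1 / ((K i : ℤ) : ℝ)) ≤
          r i ^ (1 / ((K i : ℤ) : ℝ)) :=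
        Real.rpow_le_rpow (le_of_lt (Real.rpow_pos_of_pos hδ0 _)) (hKlow i) hinv0
      rwa [← Real.rpow_mul (le_of_lt hδ0), mul_one_div, div_self hk0, Real.rpow_one] at h1
    · have h1 : r i ^ (1 / ((K i : ℤ) : ℝ)) ≤
          (δ ^ (((K i : ℤ) : ℝ) + 1)) ^ (1 / ((K i : ℤ) : ℝ)) :=
        Real.rpow_le_rpow (le_of_lt (hr0 i)) (hKhigh i) hinv0
      rw [← Real.rpow_mul (le_of_lt hδ0), mul_one_div] at h1
      refine le_trans h1 ?_
      have h2 : (((K i : ℤ) : ℝ) + 1) / ((K i : ℤ) : ℝ) ≤ 2 := by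
        rw [div_le_iff₀ (hK0R i)]
        have : (1:ℝ) ≤ ((K i : ℤ) : ℝ) := by exact_mod_cast hK1 i
        linarith
      calc δ ^ ((((K i : ℤ) : ℝ) + 1) / ((K i : ℤ) : ℝ)) ≤ δ ^ (2:ℝ) :=
            (Real.rpow_le_rpow_left_iff hδ).mpr h2
        _ = δ ^ 2 := by
            rw [show (2:ℝ) = ((2:ℕ) : ℝ) by norm_num, Real.rpow_natCast]
  have hsup : (⨆ j, ‖w j‖) = ⨆ i, ‖v i‖ := by
    have hrange : (Set.range fun j => ‖w j‖) = Set.range fun i => ‖v i‖ := by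
      ext y
      constructor
      · rintro ⟨j, rfl⟩; exact ⟨τ j, rfl⟩
      · rintro ⟨i, rfl⟩
        refine ⟨σ i, ?_⟩
        simp only [hwdef, hτσ i]
    rw [iSup, iSup, hrange]
  -- telescoping and grouping lemmas
  have tele : ∀ (H : ℤ → ℂ) (m M : ℤ), m ≤ M →
      ∑ j ∈ Finset.Ico m M, (H (j + 1) - H j) = H M - H m := by
    intro H m
    refine Int.le_induction ?_ ?_
    · simp
    · intro M hM ih
      rw [show Finset.Ico m (M + 1) = insert M (Finset.Ico m M) from by
          ext x; simp only [Finset.mem_Ico, Finset.mem_insert]; omega,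
        Finset.sum_insert (by rw [Finset.mem_Ico]; omega), ih]
      ring
  have group : ∀ (g : ℤ → ℂ) (N M : ℤ), N ≤ M →
      ∑ j ∈ Finset.Ico (σ N) (σ M), g j
        = ∑ i ∈ Finset.Ico N M, ∑ j ∈ Finset.Ico (σ i) (σ (i + 1)), g j := by
    intro g N
    refine Int.le_induction ?_ ?_
    · simp
    · intro M hM ih
      rw [show Finset.Ico N (M + 1) = insert M (Finset.Ico N M) from by
          ext x; simp only [Finset.mem_Ico, Finset.mem_insert]; omega,
        Finset.sum_insert (by rw [Finset.mem_Ico]; omega),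
        ← Finset.Ico_union_Ico_eq_Ico (hσmono N M hM) (hσmono M (M + 1) (by omega)),
        Finset.sum_union (Finset.Ico_disjoint_Ico_consecutive _ _ _), ih]
      ring
  have main : ∀ (F : ℝ → ℂ) (i : ℤ),
      ∑ j ∈ Finset.Ico (σ i) (σ (i + 1)), w j * (F (b (j + 1)) - F (b j))
        = v i * (F (a (i + 1)) - F (a i)) := by
    intro F i
    have h1 : ∑ j ∈ Finset.Ico (σ i) (σ (i + 1)), w j * (F (b (j + 1)) - F (b j))
        = ∑ j ∈ Finset.Ico (σ i) (σ (i + 1)), v i * (F (b (j + 1)) - F (b j)) := by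
      apply Finset.sum_congr rfl
      intro j hj
      simp only [Finset.mem_Ico] at hj
      rw [hwdef]
      simp only [hτuniq i j hj.1 hj.2]
    rw [h1, ← Finset.mul_sum,
      tele (fun t => F (b t)) (σ i) (σ (i + 1)) (le_of_lt (hσlt i)), hbσ i, hbσ (i + 1)]
  refine ⟨b, w, hb0, hbound, hsup, ?_⟩
  intro N₁ N₂ hN
  refine ⟨σ N₁, σ (N₂ + 1) - 1, ?_, ?_⟩
  · have := hσadd N₁ (N₂ + 1) (by omega)
    omega
  intro p f hp hf x
  have hIcc : Finset.Icc (σ N₁) (σ (N₂ + 1) - 1) = Finset.Ico (σ N₁) (σ (N₂ + 1)) := by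
    ext y; simp only [Finset.mem_Icc, Finset.mem_Ico]; omega
  have hIcc2 : Finset.Icc N₁ N₂ = Finset.Ico N₁ (N₂ + 1) := by
    ext y; simp only [Finset.mem_Icc, Finset.mem_Ico]; omega
  rw [hIcc, hIcc2, group _ N₁ (N₂ + 1) (by omega)]
  apply Finset.sum_congr rfl
  intro i _
  exact (main (fun t => ∫ z, (schwartzDil φ t z : ℂ) * f (x - z)) i).symm
end
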